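/- arXiv:0710.0652 — 5 statements merged into one kernel-verified Lean document; each statement's English description precedes it below -/
import Mathlib

section
/- Let F = {k_{ij} : 1 ≤ i ≤ j ≤ r} be a Littlewood–Richardson filling of the skew shape λ/μ with content ν. Define the r×r matrices M = diag(t^{μ_1},…,t^{μ_r}) and, for 1 ≤ i ≤ r, N_i = block-diag(1_{i−1}, T_i), where 1_{i−1} is the (i−1)×(i−1) identity matrix and T_i is the (r−i+1)×(r−i+1) upper bidiagonal matrix with diagonal entries t^{k_{i,i}}, t^{k_{i,i+1}}, …, t^{k_{i,r}} and all superdiagonal entries equal to 1. Then: inv(M) = μ; inv(N_1·N_2⋯N_i) = (ν_1, ν_2, …, ν_i, 0, …, 0) for all 1 ≤ i ≤ r; and inv(M·N_1·N_2⋯N_i) = λ^{(i)} for all 1 ≤ i ≤ r, where λ^{(i)}_j := μ_j + k_{1j} + k_{2j} + ⋯ + k_{min(i,j),j}. -/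
open Matrix

section Defs

variable {R : Type*} [CommRing R]

/-- The order `‖a‖` of `a ∈ R` with respect to a uniformizing parameter `t`:
the number of times `t` divides `a`, with `‖0‖ = ∞`. Valued in `ℕ∞`. -/
noncomputable def ord (t a : R) : ℕ∞ := emultiplicity t a

/-- The order of `a` as an integer (junk value `0` when the order is not finite). -/
noncomputable def ordZ (t a : R) : ℤ := multiplicity t a

/-- `D_μ = diag(t^{μ_1}, …, t^{μ_r})` for a 1-indexed tuple `μ : ℕ → ℕ`. -/
noncomputable def Dmu (t : R) (r : ℕ) (μ : ℕ → ℕ) : Matrix (Fin r) (Fin r) R :=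
  Matrix.diagonal fun i => t ^ μ (i.1 + 1)

/-- Upper triangular matrix. -/
def UpperTri {r : ℕ} (M : Matrix (Fin r) (Fin r) R) : Prop := ∀ i j : Fin r, j < i → M i j = 0

/-- Lower triangular matrix. -/
def LowerTri {r : ℕ} (M : Matrix (Fin r) (Fin r) R) : Prop := ∀ i j : Fin r, i < j → M i j = 0

/-- `Q ∈ GL_r(R)` is `μ`-admissible iff `D_μ · Q · D_μ⁻¹` has all entries in `R`,
i.e. `D_μ · Q = P · D_μ` for some matrix `P` over `R`. -/
def MuAdmissible (t : R) (r : ℕ) (μ : ℕ → ℕ) (Q : Matrix (Fin r) (Fin r) R) : Prop :=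
  IsUnit Q.det ∧ ∃ P : Matrix (Fin r) (Fin r) R, Dmu t r μ * Q = P * Dmu t r μ

/-- `inv(M) = μ`: the (1-indexed, non-increasing) invariant partition of `M`,
given by the Smith normal form `P · M · Q⁻¹ = D_μ` with `P, Q ∈ GL_r(R)`. -/
def SmithInv (t : R) (r : ℕ) (M : Matrix (Fin r) (Fin r) R) (μ : ℕ → ℕ) : Prop :=
  (∀ i, 1 ≤ i → i < r → μ (i + 1) ≤ μ i) ∧
  ∃ P Q : Matrix (Fin r) (Fin r) R, IsUnit P.det ∧ IsUnit Q.det ∧ P * M * Q = Dmu t r μ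

/-- Pair equivalence: `(M', N') = (P·M·Q⁻¹, Q·N·T⁻¹)` for some `P, Q, T ∈ GL_r(R)`. -/
def PairEquiv {r : ℕ} (M N M' N' : Matrix (Fin r) (Fin r) R) : Prop :=
  ∃ P Q T : Matrix (Fin r) (Fin r) R, IsUnit P.det ∧ IsUnit Q.det ∧ IsUnit T.det ∧
    P * M = M' * Q ∧ Q * N = N' * T

/-- `|μ_I|` for an index set `I` (1-indexed partition `μ`, 0-indexed `Fin`). -/
def wt (r : ℕ) (μ : ℕ → ℕ) {k : ℕ} (I : Fin k → Fin r) : ℕ := ∑ s, μ ((I s).1 + 1)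

/-- The columns `r-s+1, …, r` (the last `s` columns), 0-indexed. -/
def lastCols (r s : ℕ) (h : s ≤ r) : Fin s → Fin r :=
  fun p => ⟨r - s + p.1, by have := p.isLt; omega⟩

/-- The rows `1, …, s` (the first `s` rows), 0-indexed. -/
def firstRows (r s : ℕ) (h : s ≤ r) : Fin s → Fin r :=
  fun p => ⟨p.1, lt_of_lt_of_le p.isLt h⟩

/-- The set of (1-indexed) rows `{1,…,a} ∪ {b,…,r}`, as a `Finset (Fin r)`. -/
def rowsSet (r a b : ℕ) : Finset (Fin r) :=
  Finset.univ.filter fun x => x.1 + 1 ≤ a ∨ b ≤ x.1 + 1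

/-- The minor of `W` using the rows in the `Finset` `s` (in increasing order) and the
last `s.card` columns. -/
noncomputable def rsMinor {r : ℕ} (W : Matrix (Fin r) (Fin r) R) (s : Finset (Fin r)) : R :=
  (W.submatrix (fun p : Fin s.card => s.orderEmbOfFin rfl p)
    (lastCols r s.card (by simpa using s.card_le_univ))).det

/-- Order (in `ℕ∞`) of the minor of `W` with rows `{1,…,a} ∪ {b,…,r}` and right-justified
columns. -/
noncomputable def dMinor (t : R) {r : ℕ} (W : Matrix (Fin r) (Fin r) R) (a b : ℕ) : ℕ∞ :=
  ord t (rsMinor W (rowsSet r a b))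

/-- Integer-valued version of `dMinor`. -/
noncomputable def dMinorZ (t : R) {r : ℕ} (W : Matrix (Fin r) (Fin r) R) (a b : ℕ) : ℤ :=
  ordZ t (rsMinor W (rowsSet r a b))

/-- `N* = Q_U·Q_L·N·T_L·T_U` is a `μ`-generic matrix obtained from `N`. -/
def MuGenericVia (t : R) (r : ℕ) (μ : ℕ → ℕ) (N Nstar : Matrix (Fin r) (Fin r) R) : Prop :=
  ∃ QU QL TL TU QhL QhU : Matrix (Fin r) (Fin r) R,
    Nstar = QU * QL * N * (TL * TU) ∧
    UpperTri QU ∧ MuAdmissible t r μ QU ∧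
    LowerTri QL ∧ MuAdmissible t r μ QL ∧
    UpperTri TU ∧ IsUnit TU.det ∧
    (∃ (σ : Equiv.Perm (Fin r)) (L : Matrix (Fin r) (Fin r) R),
      LowerTri L ∧ TL = σ.permMatrix R * L) ∧
    IsUnit TL.det ∧
    UpperTri (QL * N * TL) ∧
    QU * QL = QhL * QhU ∧
    LowerTri QhL ∧ MuAdmissible t r μ QhL ∧
    UpperTri QhU ∧ MuAdmissible t r μ QhU ∧
    ∀ (k : ℕ), k ≤ r → ∀ I J : Fin k → Fin r, StrictMono I → StrictMono J →
      (ord t ((QU * QL * N * (TL * TU)).submatrix I J).det =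
        sInf {m : ℕ∞ | ∃ S : Fin k → Fin r, StrictMono S ∧ (∀ s, I s ≤ S s) ∧
          m = ord t ((QL * N * (TL * TU)).submatrix S J).det}) ∧
      (ord t ((QU * QL * N * (TL * TU)).submatrix I J).det =
        sInf {m : ℕ∞ | ∃ H : Fin k → Fin r, StrictMono H ∧ (∀ s, H s ≤ I s) ∧
          m = ord t ((QhU * N * (TL * TU)).submatrix H J).det +
            ((wt r μ H - wt r μ I : ℕ) : ℕ∞)}) ∧
      (ord t ((QU * QL * N * (TL * TU)).submatrix I J).det =
        sInf {m : ℕ∞ | ∃ H : Fin k → Fin r, StrictMono H ∧ (∀ s, H s ≤ J s) ∧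
          m = ord t ((QU * QL * N * TL).submatrix I H).det})

/-- `N*` is `μ`-generic: it arises from some full-rank `N` via the generic factorization. -/
def MuGeneric (t : R) (r : ℕ) (μ : ℕ → ℕ) (Nstar : Matrix (Fin r) (Fin r) R) : Prop :=
  ∃ N : Matrix (Fin r) (Fin r) R, N.det ≠ 0 ∧ MuGenericVia t r μ N Nstar

/-- A Littlewood–Richardson filling of the skew shape `λ/μ` with content `ν`
(1-indexed triangular array `k i j`, `1 ≤ i ≤ j ≤ r`). -/
def IsLRFilling (r : ℕ) (μ ν lam : ℕ → ℕ) (k : ℕ → ℕ → ℤ) : Prop :=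
  (∀ j, 1 ≤ j → j ≤ r → (μ j : ℤ) + ∑ s ∈ Finset.Icc 1 j, k s j = (lam j : ℤ)) ∧
  (∀ i, 1 ≤ i → i ≤ r → ∑ s ∈ Finset.Icc i r, k i s = (ν i : ℤ)) ∧
  (∀ i j, 1 ≤ i → i ≤ j → j ≤ r → 0 ≤ k i j) ∧
  (∀ i j, 2 ≤ j → j ≤ r → 1 ≤ i → i ≤ j →
    (μ j : ℤ) + ∑ s ∈ Finset.Icc 1 i, k s j ≤
      (μ (j - 1) : ℤ) + ∑ s ∈ Finset.Icc 1 (i - 1), k s (j - 1)) ∧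
  (∀ i j, 1 ≤ i → i ≤ r - 1 → i ≤ j → j ≤ r - 1 →
    ∑ s ∈ Finset.Icc (i + 1) (j + 1), k (i + 1) s ≤ ∑ s ∈ Finset.Icc i j, k i s)

/-- The determinantal formula defining the integers `k i j` from a `μ`-generic matrix:
`k_{1j} + ⋯ + k_{ij} = ‖N*(rows {1,…,j−i−1} ∪ {j,…,r})‖ − ‖N*(rows {1,…,j−i} ∪ {j+1,…,r})‖`. -/
def DetFormula (t : R) {r : ℕ} (Nstar : Matrix (Fin r) (Fin r) R) (k : ℕ → ℕ → ℤ) : Prop :=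
  ∀ i j, 1 ≤ i → i ≤ j → j ≤ r →
    ∑ s ∈ Finset.Icc 1 i, k s j =
      dMinorZ t Nstar (j - i - 1) j - dMinorZ t Nstar (j - i) (j + 1)

end Defs

/-- The block matrix `N_i` from Theorem 3.2: identity of size `i-1` block-summed with the
upper bidiagonal matrix `T_i` with diagonal `t^{k_{i,i}}, …, t^{k_{i,r}}` and superdiagonal `1`. -/
noncomputable def blockN {R : Type*} [CommRing R] (t : R) (r : ℕ) (k : ℕ → ℕ → ℤ) (i : ℕ) :
    Matrix (Fin r) (Fin r) R :=
  Matrix.of fun p q =>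
    if p.1 + 1 < i ∨ q.1 + 1 < i then (if p = q then 1 else 0)
    else if p = q then t ^ (k i (p.1 + 1)).toNat
    else if q.1 = p.1 + 1 then 1 else 0

/-- The ordered product `N_1 · N_2 ⋯ N_i`. -/
noncomputable def blockProd {R : Type*} [CommRing R] (t : R) (r : ℕ) (k : ℕ → ℕ → ℤ) (i : ℕ) :
    Matrix (Fin r) (Fin r) R :=
  ((List.range i).map fun s => blockN t r k (s + 1)).prod

section Stmt0Aux

open Matrix Finset

variable {R : Type*} [CommRing R]

/-- `kap k s c = k s c` as a natural number. -/
def kap (k : ℕ → ℕ → ℤ) (s c : ℕ) : ℕ := (k s c).toNat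

/-- Partial row sums of the filling. -/
def Knat (k : ℕ → ℕ → ℤ) (s a b : ℕ) : ℕ := ∑ c ∈ Finset.Icc a b, kap k s c

/-- The product `N_a · N_{a+1} ⋯ N_b`. -/
noncomputable def prodSeg (t : R) (r : ℕ) (k : ℕ → ℕ → ℤ) (a b : ℕ) :
    Matrix (Fin r) (Fin r) R :=
  ((List.range' a (b + 1 - a)).map (blockN t r k)).prod

lemma prodSeg_of_lt (t : R) (r : ℕ) (k : ℕ → ℕ → ℤ) {a b : ℕ} (h : b < a) :
    prodSeg t r k a b = 1 := by
  unfold prodSeg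
  rw [show b + 1 - a = 0 by omega]
  simp

lemma prodSeg_cons (t : R) (r : ℕ) (k : ℕ → ℕ → ℤ) {a b : ℕ} (h : a ≤ b) :
    prodSeg t r k a b = blockN t r k a * prodSeg t r k (a + 1) b := by
  unfold prodSeg
  rw [show b + 1 - a = (b + 1 - (a + 1)) + 1 by omega, List.range'_succ, List.map_cons,
    List.prod_cons]

lemma prodSeg_split (t : R) (r : ℕ) (k : ℕ → ℕ → ℤ) {a b c : ℕ} (h1 : a ≤ b + 1)
    (h2 : b ≤ c) :
    prodSeg t r k a c = prodSeg t r k a b * prodSeg t r k (b + 1) c := by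
  unfold prodSeg
  have h := List.range'_append (s := a) (m := b + 1 - a) (n := c + 1 - (b + 1)) (step := 1)
  rw [one_mul, show a + (b + 1 - a) = b + 1 by omega,
    show (b + 1 - a) + (c + 1 - (b + 1)) = c + 1 - a by omega] at h
  rw [← h, List.map_append, List.prod_append]

lemma blockProd_eq_prodSeg (t : R) (r : ℕ) (k : ℕ → ℕ → ℤ) (n : ℕ) :
    blockProd t r k n = prodSeg t r k 1 n := by
  unfold blockProd prodSeg
  rw [show n + 1 - 1 = n by omega, List.range'_eq_map_range, List.map_map]
  have : (fun s => blockN t r k (s + 1)) = (blockN t r k ∘ fun x => 1 + x) := by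
    funext s; simp [Function.comp, Nat.add_comm]
  rw [this]

lemma blockProd_succ (t : R) (r : ℕ) (k : ℕ → ℕ → ℤ) (n : ℕ) :
    blockProd t r k (n + 1) = blockProd t r k n * blockN t r k (n + 1) := by
  unfold blockProd
  rw [List.range_succ, List.map_append, List.prod_append]
  simp

lemma Knat_succ (k : ℕ → ℕ → ℤ) (s a m : ℕ) (h : a ≤ m + 1) :
    Knat k s a (m + 1) = Knat k s a m + kap k s (m + 1) := by
  unfold Knat
  rw [show Finset.Icc a (m + 1) = insert (m + 1) (Finset.Icc a m) by
    ext c; simp [Finset.mem_Icc, Finset.mem_insert]; omega]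
  rw [Finset.sum_insert (by simp [Finset.mem_Icc])]
  ring

lemma sum_range_shift {M : Type*} [AddCommMonoid M] (f : ℕ → M) (n : ℕ) :
    ∑ m ∈ Finset.range n, f (m + 1) = ∑ c ∈ Finset.Icc 1 n, f c := by
  induction n with
  | zero => simp
  | succ n ih =>
    rw [Finset.sum_range_succ, ih,
      show Finset.Icc 1 (n + 1) = insert (n + 1) (Finset.Icc 1 n) by
        ext c; simp [Finset.mem_Icc, Finset.mem_insert]; omega,
      Finset.sum_insert (by simp [Finset.mem_Icc])]
    exact add_comm _ _

/-- Row description of multiplication by `blockN`. -/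
lemma blockN_mulVec (t : R) (r : ℕ) (k : ℕ → ℕ → ℤ) (s : ℕ) (x : Fin r → R) (p : Fin r) :
    (blockN t r k s *ᵥ x) p =
      if s ≤ p.1 + 1 then
        t ^ kap k s (p.1 + 1) * x p + (if h : p.1 + 1 < r then x ⟨p.1 + 1, h⟩ else 0)
      else x p := by
  by_cases hp : s ≤ p.1 + 1
  · rw [if_pos hp]
    have hterm : ∀ q : Fin r, blockN t r k s p q * x q =
        (if q = p then t ^ kap k s (p.1 + 1) * x q else 0)
          + (if q.1 = p.1 + 1 then x q else 0) := by
      intro q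
      by_cases h1 : q = p
      · subst h1
        show (Matrix.of _ : Matrix (Fin r) (Fin r) R) q q * x q = _
        rw [Matrix.of_apply, if_neg (by omega), if_pos rfl, if_pos rfl, if_neg (by omega)]
        simp only [kap]
        ring
      · show (Matrix.of _ : Matrix (Fin r) (Fin r) R) p q * x q = _
        rw [Matrix.of_apply]
        by_cases h2 : q.1 = p.1 + 1
        · rw [if_neg (by omega), if_neg (by intro h; exact h1 h.symm), if_pos h2,
            if_neg h1, if_pos h2]
          ring
        · by_cases h3 : q.1 + 1 < s
          · rw [if_pos (Or.inr h3), if_neg (by intro h; exact h1 h.symm), if_neg h1,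
              if_neg h2]
            ring
          · rw [if_neg (by omega), if_neg (by intro h; exact h1 h.symm), if_neg h2,
              if_neg h1, if_neg h2]
            ring
    show (∑ q, blockN t r k s p q * x q) = _
    rw [Finset.sum_congr rfl (fun q _ => hterm q), Finset.sum_add_distrib,
      Finset.sum_ite_eq' Finset.univ p (fun q => t ^ kap k s (p.1 + 1) * x q),
      if_pos (Finset.mem_univ p)]
    congr 1
    by_cases h : p.1 + 1 < r
    · rw [dif_pos h]
      have : ∀ q : Fin r, (if q.1 = p.1 + 1 then x q else 0)
          = (if q = (⟨p.1 + 1, h⟩ : Fin r) then x q else 0) := by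
        intro q
        congr 1
        simp [Fin.ext_iff]
      rw [Finset.sum_congr rfl (fun q _ => this q),
        Finset.sum_ite_eq' Finset.univ (⟨p.1 + 1, h⟩ : Fin r) (fun q => x q),
        if_pos (Finset.mem_univ _)]
    · rw [dif_neg h, Finset.sum_eq_zero]
      intro q _
      rw [if_neg (by have := q.2; omega)]
  · rw [if_neg hp]
    have hterm : ∀ q : Fin r, blockN t r k s p q * x q = if q = p then x q else 0 := by
      intro q
      by_cases h1 : q = p
      · subst h1
        show (Matrix.of _ : Matrix (Fin r) (Fin r) R) q q * x q = _
        rw [Matrix.of_apply, if_pos (Or.inl (by omega)), if_pos rfl, if_pos rfl]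
        ring
      · show (Matrix.of _ : Matrix (Fin r) (Fin r) R) p q * x q = _
        rw [Matrix.of_apply, if_pos (Or.inl (by omega)),
          if_neg (by intro h; exact h1 h.symm), if_neg h1]
        ring
    show (∑ q, blockN t r k s p q * x q) = _
    rw [Finset.sum_congr rfl (fun q _ => hterm q),
      Finset.sum_ite_eq' Finset.univ p (fun q => x q), if_pos (Finset.mem_univ p)]

/-- Solve `blockN s *ᵥ x = w` with control on divisibility. -/
lemma step_solve (t : R) (r : ℕ) (k : ℕ → ℕ → ℤ) (s : ℕ) (hs1 : 1 ≤ s) (w : Fin r → R)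
    (H : ∀ p : Fin r, s ≤ p.1 + 1 → t ^ Knat k s s (p.1 + 1) ∣ w p) :
    ∃ x : Fin r → R, blockN t r k s *ᵥ x = w ∧
      (∀ p : Fin r, s ≤ p.1 + 1 → t ^ Knat k s s p.1 ∣ x p) ∧
      (∀ p : Fin r, p.1 + 1 < s → x p = w p) := by
  have Hc : ∀ q : Fin r, ∃ cq : R, (s ≤ q.1 + 1 → w q = t ^ Knat k s s (q.1 + 1) * cq) := by
    intro q
    by_cases h : s ≤ q.1 + 1
    · obtain ⟨cq, hc⟩ := H q h
      exact ⟨cq, fun _ => hc⟩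
    · exact ⟨0, fun h' => absurd h' h⟩
  choose c hc using Hc
  refine ⟨fun p => if s ≤ p.1 + 1 then
      (∑ q : Fin r, if p ≤ q then (-1 : R) ^ (q.1 - p.1) * (t ^ Knat k s s p.1 * c q) else 0)
    else w p, ?_, ?_, ?_⟩
  · funext p
    rw [blockN_mulVec]
    by_cases hp : s ≤ p.1 + 1
    · rw [if_pos hp, if_pos hp]
      by_cases hpr : p.1 + 1 < r
      · rw [dif_pos hpr]
        set p' : Fin r := ⟨p.1 + 1, hpr⟩ with hp'
        rw [show (if s ≤ p'.1 + 1 then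
            (∑ q : Fin r, if p' ≤ q then (-1 : R) ^ (q.1 - p'.1)
              * (t ^ Knat k s s p'.1 * c q) else 0) else w p')
          = (∑ q : Fin r, if p' ≤ q then (-1 : R) ^ (q.1 - p'.1)
              * (t ^ Knat k s s p'.1 * c q) else 0) from if_pos (by simp [hp']; omega)]
        rw [Finset.mul_sum]
        have hKs : kap k s (p.1 + 1) + Knat k s s p.1 = Knat k s s (p.1 + 1) := by
          rw [Knat_succ k s s p.1 hp]; ring
        have e1 : ∀ q : Fin r,
            t ^ kap k s (p.1 + 1) * (if p ≤ q then (-1 : R) ^ (q.1 - p.1)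
              * (t ^ Knat k s s p.1 * c q) else 0)
            = (if p ≤ q then (-1 : R) ^ (q.1 - p.1)
              * (t ^ Knat k s s (p.1 + 1) * c q) else 0) := by
          intro q
          by_cases h : p ≤ q
          · rw [if_pos h, if_pos h, ← hKs, pow_add]
            ring
          · rw [if_neg h, if_neg h, mul_zero]
        rw [Finset.sum_congr rfl (fun q _ => e1 q), ← Finset.sum_add_distrib]
        have e2 : ∀ q : Fin r,
            ((if p ≤ q then (-1 : R) ^ (q.1 - p.1) * (t ^ Knat k s s (p.1 + 1) * c q) else 0)
              + (if p' ≤ q then (-1 : R) ^ (q.1 - p'.1) * (t ^ Knat k s s p'.1 * c q) else 0))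
            = (if q = p then t ^ Knat k s s (p.1 + 1) * c q else 0) := by
          intro q
          by_cases h2 : p' ≤ q
          · have h1 : p ≤ q := by
              have h2v : p.1 + 1 ≤ q.1 := Fin.le_def.mp h2
              exact Fin.le_def.mpr (Nat.le_of_succ_le h2v)
            rw [if_pos h1, if_pos h2, if_neg (by
              intro h; subst h
              simp only [Fin.le_def, hp'] at h2
              omega)]
            have hq : q.1 - p.1 = (q.1 - p'.1) + 1 := by
              simp only [hp', Fin.le_def] at h2 ⊢
              omega
            rw [hq, pow_succ]
            show _ = (0 : R)
            have : Knat k s s p'.1 = Knat k s s (p.1 + 1) := rfl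
            rw [this]
            ring
          · by_cases h1 : p ≤ q
            · have hqp : q = p := by
                have h2' : ¬ (p.1 + 1 ≤ q.1) := by
                  intro hh; apply h2; rw [Fin.le_def]; exact hh
                simp only [Fin.le_def] at h1
                exact Fin.ext (by omega)
              subst hqp
              rw [if_pos le_rfl, if_neg h2, if_pos rfl]
              simp
            · rw [if_neg h1, if_neg h2, if_neg (by
                intro h; subst h; exact h1 le_rfl)]
              ring
        rw [Finset.sum_congr rfl (fun q _ => e2 q),
          Finset.sum_ite_eq' Finset.univ p (fun q => t ^ Knat k s s (p.1 + 1) * c q),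
          if_pos (Finset.mem_univ p)]
        exact (hc p hp).symm
      · rw [dif_neg hpr, add_zero]
        have hsum : (∑ q : Fin r, if p ≤ q then (-1 : R) ^ (q.1 - p.1)
            * (t ^ Knat k s s p.1 * c q) else 0) = t ^ Knat k s s p.1 * c p := by
          rw [Finset.sum_eq_single p]
          · rw [if_pos le_rfl]
            simp
          · intro q _ hqp
            rw [if_neg (by
              intro h
              apply hqp
              have h1 := q.2
              simp only [Fin.le_def] at h
              exact Fin.ext (by omega))]
          · intro h
            exact absurd (Finset.mem_univ p) h
        rw [hsum, ← mul_assoc, ← pow_add,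
          show kap k s (p.1 + 1) + Knat k s s p.1 = Knat k s s (p.1 + 1) from by
            rw [Knat_succ k s s p.1 hp]; ring]
        exact (hc p hp).symm
    · rw [if_neg hp, if_neg hp]
  · intro p hp
    dsimp only
    rw [if_pos hp]
    apply Finset.dvd_sum
    intro q _
    by_cases h : p ≤ q
    · rw [if_pos h]
      exact Dvd.dvd.mul_left (dvd_mul_right _ _) _
    · rw [if_neg h]
      exact dvd_zero _
  · intro p hp
    dsimp only
    rw [if_neg (by omega)]

lemma solve_seg (t : R) (r : ℕ) (k : ℕ → ℕ → ℤ) (i : ℕ)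
    (hLR4 : ∀ a b : ℕ, 1 ≤ a → a ≤ b → b ≤ r - 1 →
      Knat k (a + 1) (a + 1) (b + 1) ≤ Knat k a a b) :
    ∀ d a : ℕ, 1 ≤ a → a + d = i + 1 →
    ∀ w : Fin r → R, (∀ p : Fin r, a ≤ p.1 + 1 → t ^ Knat k a a (p.1 + 1) ∣ w p) →
    ∃ x : Fin r → R, prodSeg t r k a i *ᵥ x = w ∧
      (∀ p : Fin r, p.1 + 1 < a → x p = w p) := by
  intro d
  induction d with
  | zero =>
    intro a ha1 hai w _
    refine ⟨w, ?_, fun _ _ => rfl⟩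
    rw [prodSeg_of_lt t r k (show i < a by omega), Matrix.one_mulVec]
  | succ d ih =>
    intro a ha1 hai w H
    obtain ⟨u, hu1, hu2, hu3⟩ := step_solve t r k a ha1 w H
    have H' : ∀ p : Fin r, a + 1 ≤ p.1 + 1 → t ^ Knat k (a + 1) (a + 1) (p.1 + 1) ∣ u p := by
      intro p hp
      have h4 : Knat k (a + 1) (a + 1) (p.1 + 1) ≤ Knat k a a p.1 :=
        hLR4 a p.1 ha1 (by omega) (by have := p.2; omega)
      exact dvd_trans (pow_dvd_pow t h4) (hu2 p (by omega))
    obtain ⟨x, hx1, hx2⟩ := ih (a + 1) (by omega) (by omega) u H'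
    refine ⟨x, ?_, ?_⟩
    · rw [prodSeg_cons t r k (show a ≤ i by omega), ← Matrix.mulVec_mulVec, hx1, hu1]
    · intro p hp
      rw [hx2 p (by omega), hu3 p hp]

/-- The last standard basis vector. -/
def eLast (r : ℕ) : Fin r → R := fun p => if p.1 + 1 = r then 1 else 0

/-- The explicit solution of `blockN j *ᵥ u = t^{ν_j} e_r`. -/
def uvec (t : R) (r : ℕ) (k : ℕ → ℕ → ℤ) (j : ℕ) : Fin r → R :=
  fun p => if j ≤ p.1 + 1 then (-1 : R) ^ (r - (p.1 + 1)) * t ^ Knat k j j p.1 else 0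

lemma blockN_uvec (t : R) (r : ℕ) (k : ℕ → ℕ → ℤ) (j : ℕ) (hj : 1 ≤ j) (hjr : j ≤ r) :
    blockN t r k j *ᵥ uvec t r k j = (t ^ Knat k j j r) • eLast r := by
  funext p
  rw [blockN_mulVec]
  by_cases hp : j ≤ p.1 + 1
  · rw [if_pos hp]
    by_cases hpr : p.1 + 1 < r
    · rw [dif_pos hpr]
      have h1 : uvec t r k j p = (-1 : R) ^ (r - (p.1 + 1)) * t ^ Knat k j j p.1 := by
        unfold uvec; rw [if_pos hp]
      have h2 : ∀ q : Fin r, q.1 = p.1 + 1 → uvec t r k j q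
          = (-1 : R) ^ (r - (p.1 + 1 + 1)) * t ^ Knat k j j (p.1 + 1) := by
        intro q hq
        unfold uvec
        rw [hq, if_pos (by omega)]
      rw [h1, h2 ⟨p.1 + 1, hpr⟩ rfl]
      have h3 : (eLast r : Fin r → R) p = 0 := by
        unfold eLast; rw [if_neg (by omega)]
      rw [Pi.smul_apply, h3, smul_eq_mul, mul_zero]
      have h4 : Knat k j j (p.1 + 1) = kap k j (p.1 + 1) + Knat k j j p.1 := by
        rw [Knat_succ k j j p.1 hp]; ring
      have h5 : r - (p.1 + 1) = (r - (p.1 + 1 + 1)) + 1 := by omega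
      rw [h4, h5, pow_add, pow_add, pow_succ]
      ring
    · have hpr' : p.1 + 1 = r := by have := p.2; omega
      rw [dif_neg hpr, add_zero]
      have h1 : uvec t r k j p = (-1 : R) ^ (r - (p.1 + 1)) * t ^ Knat k j j p.1 := by
        unfold uvec; rw [if_pos hp]
      have h3 : (eLast r : Fin r → R) p = 1 := by
        unfold eLast; rw [if_pos hpr']
      rw [h1, Pi.smul_apply, h3, smul_eq_mul, mul_one]
      rw [show r - (p.1 + 1) = 0 by omega, pow_zero, one_mul, ← pow_add]
      congr 1
      rw [show Knat k j j r = Knat k j j (p.1 + 1) from by rw [hpr'],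
        Knat_succ k j j p.1 hp]
      ring
  · rw [if_neg hp]
    have h1 : uvec t r k j p = 0 := by unfold uvec; rw [if_neg hp]
    have h3 : (eLast r : Fin r → R) p = 0 := by
      unfold eLast; rw [if_neg (by omega)]
    rw [h1, Pi.smul_apply, h3, smul_eq_mul, mul_zero]

lemma exists_v (t : R) (r : ℕ) (k : ℕ → ℕ → ℤ) (i : ℕ) (hi : i ≤ r)
    (hLR4 : ∀ a b : ℕ, 1 ≤ a → a ≤ b → b ≤ r - 1 →
      Knat k (a + 1) (a + 1) (b + 1) ≤ Knat k a a b)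
    (j : ℕ) (h1j : 1 ≤ j) (hji : j ≤ i) :
    ∃ v : Fin r → R,
      prodSeg t r k j i *ᵥ v = (t ^ Knat k j j r) • (eLast r : Fin r → R) ∧
      (∀ p : Fin r, p.1 + 1 < j → v p = 0) ∧
      (∀ p : Fin r, p.1 + 1 = j → v p = (-1 : R) ^ (r - j)) := by
  have Hu : ∀ p : Fin r, j + 1 ≤ p.1 + 1 →
      t ^ Knat k (j + 1) (j + 1) (p.1 + 1) ∣ uvec t r k j p := by
    intro p hp
    have h4 : Knat k (j + 1) (j + 1) (p.1 + 1) ≤ Knat k j j p.1 :=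
      hLR4 j p.1 h1j (by omega) (by have := p.2; omega)
    unfold uvec
    rw [if_pos (by omega)]
    exact ((pow_dvd_pow t h4).mul_left _)
  obtain ⟨x, hx1, hx2⟩ := solve_seg t r k i hLR4 (i - j) (j + 1) (by omega) (by omega)
    (uvec t r k j) Hu
  refine ⟨x, ?_, ?_, ?_⟩
  · rw [prodSeg_cons t r k hji, ← Matrix.mulVec_mulVec, hx1,
      blockN_uvec t r k j h1j (le_trans hji hi)]
  · intro p hp
    rw [hx2 p (by omega)]
    unfold uvec
    rw [if_neg (by omega)]
  · intro p hp
    rw [hx2 p (by omega)]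
    unfold uvec
    rw [if_pos (by omega)]
    have h0 : Knat k j j p.1 = 0 := by
      unfold Knat
      rw [Finset.Icc_eq_empty (by omega)]
      simp
    rw [h0, pow_zero, mul_one, hp]

lemma det_blockN (t : R) (r : ℕ) (k : ℕ → ℕ → ℤ) (s : ℕ) (hs1 : 1 ≤ s) :
    (blockN t r k s).det = t ^ Knat k s s r := by
  have hBT : (blockN t r k s).BlockTriangular id := by
    intro p q hqp
    have hlt : q.1 < p.1 := hqp
    show (Matrix.of _ : Matrix (Fin r) (Fin r) R) p q = 0
    rw [Matrix.of_apply]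
    have hne : ¬ p = q := by intro h; subst h; omega
    have hne2 : ¬ q.1 = p.1 + 1 := by omega
    by_cases h3 : p.1 + 1 < s ∨ q.1 + 1 < s
    · rw [if_pos h3, if_neg hne]
    · rw [if_neg h3, if_neg hne, if_neg hne2]
  rw [Matrix.det_of_upperTriangular hBT]
  have hdiag : ∀ p : Fin r, blockN t r k s p p
      = t ^ (if p.1 + 1 < s then 0 else kap k s (p.1 + 1)) := by
    intro p
    show (Matrix.of _ : Matrix (Fin r) (Fin r) R) p p = _
    rw [Matrix.of_apply]
    by_cases h : p.1 + 1 < s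
    · rw [if_pos (Or.inl h), if_pos rfl, if_pos h, pow_zero]
    · rw [if_neg (by omega), if_pos rfl, if_neg h]
      rfl
  rw [Finset.prod_congr rfl (fun p _ => hdiag p), Finset.prod_pow_eq_pow_sum]
  congr 1
  rw [Fin.sum_univ_eq_sum_range (fun m => if m + 1 < s then 0 else kap k s (m + 1)) r,
    sum_range_shift (fun c => if c < s then 0 else kap k s c) r]
  unfold Knat
  rw [show Finset.Icc s r = Finset.filter (fun c => ¬ c < s) (Finset.Icc 1 r) by
    ext c; simp only [Finset.mem_Icc, Finset.mem_filter]; omega]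
  rw [Finset.sum_filter]
  apply Finset.sum_congr rfl
  intro c _
  by_cases h : c < s
  · rw [if_pos h, if_neg (by omega)]
  · rw [if_neg h, if_pos h]

lemma det_blockProd (t : R) (r : ℕ) (k : ℕ → ℕ → ℤ) (n : ℕ) :
    (blockProd t r k n).det = t ^ (∑ c ∈ Finset.Icc 1 n, Knat k c c r) := by
  induction n with
  | zero =>
    unfold blockProd
    simp
  | succ n ih =>
    rw [blockProd_succ, Matrix.det_mul, ih, det_blockN t r k (n + 1) (by omega), ← pow_add]
    congr 1
    rw [show Finset.Icc 1 (n + 1) = insert (n + 1) (Finset.Icc 1 n) by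
      ext c; simp only [Finset.mem_Icc, Finset.mem_insert]; omega,
      Finset.sum_insert (by simp [Finset.mem_Icc])]
    ring

lemma part2_smith [IsDomain R] (t : R) (ht0 : t ≠ 0) (r : ℕ) (k : ℕ → ℕ → ℤ) (ν : ℕ → ℕ)
    (i : ℕ) (h1i : 1 ≤ i) (hir : i ≤ r)
    (hν : ∀ s, 1 ≤ s → s < r → ν (s + 1) ≤ ν s)
    (hLR1 : ∀ j, 1 ≤ j → j ≤ r → Knat k j j r = ν j)
    (hLR4 : ∀ a b : ℕ, 1 ≤ a → a ≤ b → b ≤ r - 1 →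
      Knat k (a + 1) (a + 1) (b + 1) ≤ Knat k a a b) :
    SmithInv t r (blockProd t r k i) (fun s => if s ≤ i then ν s else 0) := by
  constructor
  · intro s hs hsr
    dsimp only
    by_cases h : s + 1 ≤ i
    · rw [if_pos h, if_pos (by omega)]
      exact hν s hs hsr
    · rw [if_neg h]
      exact Nat.zero_le _
  have hV : ∀ j : ℕ, ∃ v : Fin r → R, 1 ≤ j → j ≤ i →
      (prodSeg t r k j i *ᵥ v = (t ^ Knat k j j r) • (eLast r : Fin r → R) ∧
       (∀ p : Fin r, p.1 + 1 < j → v p = 0) ∧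
       (∀ p : Fin r, p.1 + 1 = j → v p = (-1 : R) ^ (r - j))) := by
    intro j
    by_cases h : 1 ≤ j ∧ j ≤ i
    · obtain ⟨v, h1, h2, h3⟩ := exists_v t r k i hir hLR4 j h.1 h.2
      exact ⟨v, fun _ _ => ⟨h1, h2, h3⟩⟩
    · exact ⟨0, fun h1 h2 => absurd ⟨h1, h2⟩ h⟩
  choose V hV using hV
  set A : Matrix (Fin r) (Fin r) R := prodSeg t r k 1 i with hA
  set y : ℕ → Fin r → R := fun j => prodSeg t r k 1 (j - 1) *ᵥ (eLast r : Fin r → R) with hy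
  set X : Matrix (Fin r) (Fin r) R := Matrix.of fun p q =>
    if q.1 + 1 ≤ i then V (q.1 + 1) p else if p = q then 1 else 0 with hX
  set Y : Matrix (Fin r) (Fin r) R := Matrix.of fun p q =>
    if q.1 + 1 ≤ i then y (q.1 + 1) p else A p q with hY
  have hAV : ∀ j : ℕ, 1 ≤ j → j ≤ i → A *ᵥ V j = (t ^ Knat k j j r) • y j := by
    intro j h1 h2
    obtain ⟨hv1, hv2, hv3⟩ := hV j h1 h2
    rw [hA, prodSeg_split t r k (show 1 ≤ (j - 1) + 1 by omega) (show j - 1 ≤ i by omega),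
      show (j - 1) + 1 = j by omega, ← Matrix.mulVec_mulVec, hv1, Matrix.mulVec_smul]
  have hAX : blockProd t r k i * X
      = Y * Dmu t r (fun s => if s ≤ i then ν s else 0) := by
    rw [blockProd_eq_prodSeg, ← hA]
    ext p q
    rw [Matrix.mul_apply,
      show Dmu t r (fun s => if s ≤ i then ν s else 0)
        = Matrix.diagonal (fun q : Fin r => t ^ (if q.1 + 1 ≤ i then ν (q.1 + 1) else 0))
        from rfl,
      Matrix.mul_diagonal]
    by_cases hq : q.1 + 1 ≤ i
    · have e1 : ∀ c : Fin r, A p c * X c q = A p c * V (q.1 + 1) c := by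
        intro c
        rw [hX]
        simp only [Matrix.of_apply, if_pos hq]
      rw [Finset.sum_congr rfl (fun c _ => e1 c),
        show (∑ c, A p c * V (q.1 + 1) c) = (A *ᵥ V (q.1 + 1)) p from rfl,
        hAV (q.1 + 1) (by omega) hq, Pi.smul_apply, smul_eq_mul]
      rw [hY]
      simp only [Matrix.of_apply, if_pos hq]
      rw [hLR1 (q.1 + 1) (by omega) (by omega)]
      ring
    · have e1 : ∀ c : Fin r, A p c * X c q = if c = q then A p c else 0 := by
        intro c
        rw [hX]
        simp only [Matrix.of_apply, if_neg hq]
        by_cases h : c = q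
        · rw [if_pos h, if_pos h, mul_one]
        · rw [if_neg h, if_neg h, mul_zero]
      rw [Finset.sum_congr rfl (fun c _ => e1 c),
        Finset.sum_ite_eq' Finset.univ q (fun c => A p c), if_pos (Finset.mem_univ q)]
      rw [hY]
      simp only [Matrix.of_apply, if_neg hq, pow_zero, mul_one]
  have hXtri : X.BlockTriangular OrderDual.toDual := by
    intro p q h
    have hpq : p.1 < q.1 := h
    rw [hX]
    simp only [Matrix.of_apply]
    by_cases hq : q.1 + 1 ≤ i
    · rw [if_pos hq]
      exact (hV (q.1 + 1) (by omega) hq).2.1 p (by omega)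
    · rw [if_neg hq, if_neg (by intro hh; subst hh; omega)]
  have hXdiag : ∀ p : Fin r, X p p = if p.1 + 1 ≤ i then (-1 : R) ^ (r - (p.1 + 1)) else 1 := by
    intro p
    rw [hX]
    simp only [Matrix.of_apply]
    by_cases hq : p.1 + 1 ≤ i
    · rw [if_pos hq, if_pos hq, (hV (p.1 + 1) (by omega) hq).2.2 p rfl]
    · simp [hq]
  have hdetX : X.det = ∏ p : Fin r, X p p := Matrix.det_of_lowerTriangular X hXtri
  have hXunit : IsUnit X.det := by
    apply IsUnit.of_mul_eq_one X.det
    rw [hdetX, ← Finset.prod_mul_distrib]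
    rw [Finset.prod_congr rfl (fun p _ => ?_), Finset.prod_const_one]
    rw [hXdiag p]
    by_cases hq : p.1 + 1 ≤ i
    · rw [if_pos hq, ← pow_add]
      exact Even.neg_one_pow ⟨_, rfl⟩
    · rw [if_neg hq, mul_one]
  have hdetA : (blockProd t r k i).det = t ^ (∑ c ∈ Finset.Icc 1 i, ν c) := by
    rw [det_blockProd]
    congr 1
    apply Finset.sum_congr rfl
    intro c hc
    simp only [Finset.mem_Icc] at hc
    exact hLR1 c hc.1 (le_trans hc.2 hir)
  have hdetD : (Dmu t r (fun s => if s ≤ i then ν s else 0)).det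
      = t ^ (∑ c ∈ Finset.Icc 1 i, ν c) := by
    rw [show Dmu t r (fun s => if s ≤ i then ν s else 0)
        = Matrix.diagonal (fun q : Fin r => t ^ (if q.1 + 1 ≤ i then ν (q.1 + 1) else 0))
        from rfl,
      Matrix.det_diagonal, Finset.prod_pow_eq_pow_sum]
    congr 1
    rw [Fin.sum_univ_eq_sum_range (fun m => if m + 1 ≤ i then ν (m + 1) else 0) r,
      sum_range_shift (fun c => if c ≤ i then ν c else 0) r,
      show Finset.Icc 1 i = Finset.filter (fun c => c ≤ i) (Finset.Icc 1 r) by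
        ext c; simp only [Finset.mem_Icc, Finset.mem_filter]; omega,
      Finset.sum_filter]
  have hdetY : Y.det = X.det := by
    have h := congrArg Matrix.det hAX
    rw [Matrix.det_mul, Matrix.det_mul, hdetA, hdetD, mul_comm Y.det] at h
    exact (mul_left_cancel₀ (pow_ne_zero _ ht0) h).symm
  have hYunit : IsUnit Y.det := hdetY ▸ hXunit
  refine ⟨Y⁻¹, X, ?_, hXunit, ?_⟩
  · have h1 : Y⁻¹ * Y = 1 := Matrix.nonsing_inv_mul Y hYunit
    have h2 := congrArg Matrix.det h1
    rw [Matrix.det_mul, Matrix.det_one] at h2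
    exact IsUnit.of_mul_eq_one _ h2
  · rw [Matrix.mul_assoc, hAX, ← Matrix.mul_assoc, Matrix.nonsing_inv_mul Y hYunit,
      Matrix.one_mul]

/-- The partial shapes `λ^{(i)}`. -/
def lamN (μ : ℕ → ℕ) (k : ℕ → ℕ → ℤ) (i' j : ℕ) : ℕ :=
  μ j + ∑ c ∈ Finset.Icc 1 (min i' j), kap k c j

lemma lamN_zero (μ : ℕ → ℕ) (k : ℕ → ℕ → ℤ) (j : ℕ) : lamN μ k 0 j = μ j := by
  unfold lamN
  rw [Nat.zero_min]
  simp

lemma lamN_succ (μ : ℕ → ℕ) (k : ℕ → ℕ → ℤ) (s' j : ℕ) :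
    lamN μ k (s' + 1) j = lamN μ k s' j + (if s' + 1 ≤ j then kap k (s' + 1) j else 0) := by
  unfold lamN
  by_cases h : s' + 1 ≤ j
  · rw [if_pos h, show min (s' + 1) j = s' + 1 by omega, show min s' j = s' by omega,
      show Finset.Icc 1 (s' + 1) = insert (s' + 1) (Finset.Icc 1 s') by
        ext c; simp only [Finset.mem_Icc, Finset.mem_insert]; omega,
      Finset.sum_insert (by simp [Finset.mem_Icc])]
    ring
  · rw [if_neg h, show min (s' + 1) j = min s' j by omega, add_zero]

/-- The unipotent factor in `D_{λ^{(s)}} N_{s+1} = P D_{λ^{(s+1)}}`. -/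
noncomputable def Pstep (t : R) (r : ℕ) (μ : ℕ → ℕ) (k : ℕ → ℕ → ℤ) (s' : ℕ) :
    Matrix (Fin r) (Fin r) R :=
  Matrix.of fun p q =>
    if p = q then 1
    else if q.1 = p.1 + 1 ∧ s' + 1 ≤ p.1 + 1 then
      t ^ (lamN μ k s' (p.1 + 1) - lamN μ k (s' + 1) (p.1 + 2))
    else 0

lemma dmu_mul_blockN (t : R) (r : ℕ) (μ : ℕ → ℕ) (k : ℕ → ℕ → ℤ) (s' : ℕ)
    (hll : ∀ m, s' + 1 ≤ m → m + 1 ≤ r → lamN μ k (s' + 1) (m + 1) ≤ lamN μ k s' m) :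
    Dmu t r (lamN μ k s') * blockN t r k (s' + 1)
      = Pstep t r μ k s' * Dmu t r (lamN μ k (s' + 1)) := by
  ext p q
  rw [show Dmu t r (lamN μ k s')
      = Matrix.diagonal (fun p : Fin r => t ^ lamN μ k s' (p.1 + 1)) from rfl,
    show Dmu t r (lamN μ k (s' + 1))
      = Matrix.diagonal (fun p : Fin r => t ^ lamN μ k (s' + 1) (p.1 + 1)) from rfl,
    Matrix.diagonal_mul, Matrix.mul_diagonal]
  by_cases h1 : p = q
  · subst h1
    show t ^ lamN μ k s' (p.1 + 1) * (Matrix.of _ : Matrix (Fin r) (Fin r) R) p p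
      = (Matrix.of _ : Matrix (Fin r) (Fin r) R) p p * t ^ lamN μ k (s' + 1) (p.1 + 1)
    rw [Matrix.of_apply, Matrix.of_apply, if_pos rfl]
    by_cases h : p.1 + 1 < s' + 1
    · have e := lamN_succ μ k s' (p.1 + 1)
      rw [if_neg (by omega), add_zero] at e
      rw [if_pos (Or.inl h), if_pos rfl, e]
      ring
    · have e := lamN_succ μ k s' (p.1 + 1)
      rw [if_pos (by omega)] at e
      rw [if_neg (by omega), if_pos rfl, if_pos rfl, e, pow_add]
      simp only [kap]
      ring
  · by_cases h2 : q.1 = p.1 + 1 ∧ s' + 1 ≤ p.1 + 1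
    · obtain ⟨h2a, h2b⟩ := h2
      show t ^ lamN μ k s' (p.1 + 1) * (Matrix.of _ : Matrix (Fin r) (Fin r) R) p q
        = (Matrix.of _ : Matrix (Fin r) (Fin r) R) p q * t ^ lamN μ k (s' + 1) (q.1 + 1)
      rw [Matrix.of_apply, Matrix.of_apply, if_neg (by omega), if_neg h1, if_pos h2a,
        if_neg h1, if_pos ⟨h2a, h2b⟩, mul_one, h2a, ← pow_add,
        Nat.sub_add_cancel (hll (p.1 + 1) h2b (by have := q.2; omega))]
    · show t ^ lamN μ k s' (p.1 + 1) * (Matrix.of _ : Matrix (Fin r) (Fin r) R) p q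
        = (Matrix.of _ : Matrix (Fin r) (Fin r) R) p q * t ^ lamN μ k (s' + 1) (q.1 + 1)
      rw [Matrix.of_apply, Matrix.of_apply]
      by_cases h3 : p.1 + 1 < s' + 1 ∨ q.1 + 1 < s' + 1
      · rw [if_pos h3, if_neg h1, if_neg h1, if_neg h2]
        ring
      · have hq : ¬ q.1 = p.1 + 1 := by
          intro hq
          exact h2 ⟨hq, by omega⟩
        rw [if_neg h3, if_neg h1, if_neg hq, if_neg h1, if_neg h2]
        ring

lemma det_Pstep (t : R) (r : ℕ) (μ : ℕ → ℕ) (k : ℕ → ℕ → ℤ) (s' : ℕ) :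
    (Pstep t r μ k s').det = 1 := by
  have hBT : (Pstep t r μ k s').BlockTriangular id := by
    intro p q hqp
    have hlt : q.1 < p.1 := hqp
    show (Matrix.of _ : Matrix (Fin r) (Fin r) R) p q = 0
    rw [Matrix.of_apply, if_neg (by intro h; subst h; omega),
      if_neg (by intro h; omega)]
  rw [Matrix.det_of_upperTriangular hBT]
  apply Finset.prod_eq_one
  intro p _
  show (Matrix.of _ : Matrix (Fin r) (Fin r) R) p p = 1
  rw [Matrix.of_apply, if_pos rfl]

lemma part3_fact (t : R) (r : ℕ) (μ : ℕ → ℕ) (k : ℕ → ℕ → ℤ)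
    (hll : ∀ s' m, s' + 1 ≤ m → m + 1 ≤ r → lamN μ k (s' + 1) (m + 1) ≤ lamN μ k s' m) :
    ∀ n : ℕ, ∃ P : Matrix (Fin r) (Fin r) R, IsUnit P.det ∧
      Dmu t r μ * blockProd t r k n = P * Dmu t r (lamN μ k n) := by
  intro n
  induction n with
  | zero =>
    refine ⟨1, by simp, ?_⟩
    have h1 : blockProd t r k 0 = 1 := by unfold blockProd; simp
    rw [h1, Matrix.mul_one, Matrix.one_mul,
      show lamN μ k 0 = μ from funext (lamN_zero μ k)]
  | succ n ih =>
    obtain ⟨P, hPu, hP⟩ := ih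
    refine ⟨P * Pstep t r μ k n, ?_, ?_⟩
    · rw [Matrix.det_mul, det_Pstep, mul_one]
      exact hPu
    · rw [blockProd_succ, ← Matrix.mul_assoc, hP, Matrix.mul_assoc,
        dmu_mul_blockN t r μ k n (fun m hm1 hm2 => hll n m hm1 hm2), ← Matrix.mul_assoc]

end Stmt0Aux


theorem stmt0 {R : Type*} [CommRing R] [IsDomain R] [IsDiscreteValuationRing R]
    [CharZero (IsLocalRing.ResidueField R)]
    (t : R) (ht : Irreducible t) (r : ℕ) (μ ν lam : ℕ → ℕ) (k : ℕ → ℕ → ℤ)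
    (hμ : ∀ i, 1 ≤ i → i < r → μ (i + 1) ≤ μ i)
    (hν : ∀ i, 1 ≤ i → i < r → ν (i + 1) ≤ ν i)
    (hlam : ∀ i, 1 ≤ i → i < r → lam (i + 1) ≤ lam i)
    (hsub : ∀ j, 1 ≤ j → j ≤ r → μ j ≤ lam j)
    (hF : IsLRFilling r μ ν lam k) :
    SmithInv t r (Dmu t r μ) μ ∧
    (∀ i, 1 ≤ i → i ≤ r →
      SmithInv t r (blockProd t r k i) (fun s => if s ≤ i then ν s else 0) ∧
      SmithInv t r (Dmu t r μ * blockProd t r k i)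
        (fun j => μ j + (∑ s ∈ Finset.Icc 1 (min i j), k s j).toNat)) := by
  obtain ⟨hL1, hL2, hL3, hL4, hL5⟩ := hF
  have hkcast : ∀ s c, 1 ≤ s → s ≤ c → c ≤ r → ((kap k s c : ℕ) : ℤ) = k s c :=
    fun s c h1 h2 h3 => Int.toNat_of_nonneg (hL3 s c h1 h2 h3)
  have hLR1n : ∀ j, 1 ≤ j → j ≤ r → Knat k j j r = ν j := by
    intro j h1 h2
    have hc : ((Knat k j j r : ℕ) : ℤ) = ((ν j : ℕ) : ℤ) := by
      rw [← hL2 j h1 h2]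
      unfold Knat
      rw [Nat.cast_sum]
      apply Finset.sum_congr rfl
      intro c hc
      simp only [Finset.mem_Icc] at hc
      exact hkcast j c h1 hc.1 hc.2
    exact_mod_cast hc
  have hLR4n : ∀ a b, 1 ≤ a → a ≤ b → b ≤ r - 1 →
      Knat k (a + 1) (a + 1) (b + 1) ≤ Knat k a a b := by
    intro a b h1 h2 h3
    have h := hL5 a b h1 (by omega) h2 h3
    have hA : ((Knat k (a + 1) (a + 1) (b + 1) : ℕ) : ℤ)
        = ∑ s ∈ Finset.Icc (a + 1) (b + 1), k (a + 1) s := by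
      unfold Knat
      rw [Nat.cast_sum]
      apply Finset.sum_congr rfl
      intro c hc
      simp only [Finset.mem_Icc] at hc
      exact hkcast (a + 1) c (by omega) hc.1 (by omega)
    have hB : ((Knat k a a b : ℕ) : ℤ) = ∑ s ∈ Finset.Icc a b, k a s := by
      unfold Knat
      rw [Nat.cast_sum]
      apply Finset.sum_congr rfl
      intro c hc
      simp only [Finset.mem_Icc] at hc
      exact hkcast a c h1 hc.1 (by omega)
    rw [← hA, ← hB] at h
    exact_mod_cast h
  have hLR3n : ∀ i' j, 2 ≤ j → j ≤ r → 1 ≤ i' → i' ≤ j →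
      μ j + ∑ c ∈ Finset.Icc 1 i', kap k c j
        ≤ μ (j - 1) + ∑ c ∈ Finset.Icc 1 (i' - 1), kap k c (j - 1) := by
    intro i' j hj2 hjr hi1 hij
    have h := hL4 i' j hj2 hjr hi1 hij
    have hA : ((μ j + ∑ c ∈ Finset.Icc 1 i', kap k c j : ℕ) : ℤ)
        = (μ j : ℤ) + ∑ s ∈ Finset.Icc 1 i', k s j := by
      push_cast [Nat.cast_sum]
      congr 1
      apply Finset.sum_congr rfl
      intro c hc
      simp only [Finset.mem_Icc] at hc
      exact hkcast c j hc.1 (le_trans hc.2 hij) hjr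
    have hB : ((μ (j - 1) + ∑ c ∈ Finset.Icc 1 (i' - 1), kap k c (j - 1) : ℕ) : ℤ)
        = (μ (j - 1) : ℤ) + ∑ s ∈ Finset.Icc 1 (i' - 1), k s (j - 1) := by
      push_cast [Nat.cast_sum]
      congr 1
      apply Finset.sum_congr rfl
      intro c hc
      simp only [Finset.mem_Icc] at hc
      exact hkcast c (j - 1) hc.1 (by omega) (by omega)
    rw [← hA, ← hB] at h
    exact_mod_cast h
  have hll : ∀ s' m, s' + 1 ≤ m → m + 1 ≤ r →
      lamN μ k (s' + 1) (m + 1) ≤ lamN μ k s' m := by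
    intro s' m h1 h2
    unfold lamN
    rw [show min (s' + 1) (m + 1) = s' + 1 by omega, show min s' m = s' by omega]
    exact hLR3n (s' + 1) (m + 1) (by omega) (by omega) (by omega) (by omega)
  refine ⟨⟨hμ, 1, 1, by simp, by simp, by rw [Matrix.one_mul, Matrix.mul_one]⟩, ?_⟩
  intro i h1i hir
  have hfix : ∀ j', 1 ≤ j' → j' ≤ r →
      μ j' + (∑ s ∈ Finset.Icc 1 (min i j'), k s j').toNat = lamN μ k i j' := by
    intro j' h1 h2
    unfold lamN
    congr 1
    have hc : (∑ s ∈ Finset.Icc 1 (min i j'), k s j')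
        = ((∑ c ∈ Finset.Icc 1 (min i j'), kap k c j' : ℕ) : ℤ) := by
      rw [Nat.cast_sum]
      apply Finset.sum_congr rfl
      intro c hc
      simp only [Finset.mem_Icc] at hc
      exact (hkcast c j' hc.1 (le_trans hc.2 (min_le_right _ _)) h2).symm
    rw [hc, Int.toNat_natCast]
  constructor
  · exact part2_smith t ht.ne_zero r k ν i h1i hir hν hLR1n hLR4n
  · obtain ⟨P, hPu, hP⟩ := part3_fact t r μ k hll i
    constructor
    · intro j h1j hjr
      dsimp only
      rw [hfix (j + 1) (by omega) (by omega), hfix j h1j (by omega)]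
      unfold lamN
      have hmono := hLR3n (min i (j + 1)) (j + 1) (by omega) (by omega)
        (by omega) (by omega)
      refine le_trans (by exact_mod_cast hmono) ?_
      apply Nat.add_le_add_left
      apply Finset.sum_le_sum_of_subset
      intro c hc
      simp only [Finset.mem_Icc] at hc ⊢
      omega
    · refine ⟨P⁻¹, 1, ?_, by simp, ?_⟩
      · have h1 : P⁻¹ * P = 1 := Matrix.nonsing_inv_mul P hPu
        have h2 := congrArg Matrix.det h1
        rw [Matrix.det_mul, Matrix.det_one] at h2
        exact IsUnit.of_mul_eq_one _ h2
      · rw [Matrix.mul_one, hP, ← Matrix.mul_assoc, Matrix.nonsing_inv_mul P hPu,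
          Matrix.one_mul]
        show Dmu t r (lamN μ k i) = _
        unfold Dmu
        refine congrArg Matrix.diagonal (funext fun p => ?_)
        congr 1
        exact (hfix (p.1 + 1) (by omega) (by have := p.2; omega)).symm
end

section
/- Let N* be a μ-generic r×r matrix over R, and let I, H, J be index sets of length k ≤ r with I ⊆ H ⊆ J. Then ‖N*_{IJ}‖ ≤ ‖N*_{HJ}‖ ≤ ‖N*_{IJ}‖ + |μ_I| − |μ_H|. -/
open Matrix

lemma mu_anti (r : ℕ) (μ : ℕ → ℕ) (hμ : ∀ i, 1 ≤ i → i < r → μ (i + 1) ≤ μ i) :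
    ∀ a b, 1 ≤ a → a ≤ b → b ≤ r → μ b ≤ μ a := by
  intro a b ha hab
  induction b, hab using Nat.le_induction with
  | base => intro _; exact le_refl _
  | succ b hb ih =>
    intro hbr
    exact le_trans (hμ b (le_trans ha hb) (by omega)) (ih (by omega))

lemma wt_mono {r k : ℕ} (μ : ℕ → ℕ) (hμ : ∀ i, 1 ≤ i → i < r → μ (i + 1) ≤ μ i)
    (A B : Fin k → Fin r) (hAB : ∀ s, A s ≤ B s) : wt r μ B ≤ wt r μ A := by
  unfold wt
  apply Finset.sum_le_sum
  intro s _
  have h1 : (A s).1 ≤ (B s).1 := hAB s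
  have h2 : (B s).1 < r := (B s).isLt
  exact mu_anti r μ hμ ((A s).1 + 1) ((B s).1 + 1) (by omega) (by omega) (by omega)

theorem stmt6 {R : Type*} [CommRing R] [IsDomain R] [IsDiscreteValuationRing R]
    [CharZero (IsLocalRing.ResidueField R)]
    (t : R) (ht : Irreducible t) (r : ℕ) (μ : ℕ → ℕ)
    (hμ : ∀ i, 1 ≤ i → i < r → μ (i + 1) ≤ μ i)
    (Nstar : Matrix (Fin r) (Fin r) R) (hgen : MuGeneric t r μ Nstar)
    (k : ℕ) (hkr : k ≤ r) (I H J : Fin k → Fin r)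
    (hI : StrictMono I) (hH : StrictMono H) (hJ : StrictMono J)
    (hIH : ∀ s, I s ≤ H s) (hHJ : ∀ s, H s ≤ J s) :
    ord t (Nstar.submatrix I J).det ≤ ord t (Nstar.submatrix H J).det ∧
    ord t (Nstar.submatrix H J).det ≤
      ord t (Nstar.submatrix I J).det + ((wt r μ I - wt r μ H : ℕ) : ℕ∞) := by
  obtain ⟨N, hN, QU, QL, TL, TU, QhL, QhU, hNs, -, -, -, -, -, -, -, -, -, -, -, -, -, -, hE⟩ :=
    hgen
  obtain ⟨E1I, E2I, -⟩ := hE k hkr I J hI hJ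
  obtain ⟨E1H, E2H, -⟩ := hE k hkr H J hH hJ
  subst hNs
  constructor
  · rw [E1I, E1H]
    apply sInf_le_sInf
    rintro m ⟨S, hS, hHS, rfl⟩
    exact ⟨S, hS, fun s => le_trans (hIH s) (hHS s), rfl⟩
  · rw [E2I, E2H]
    set f : (Fin k → Fin r) → ℕ∞ := fun H' =>
      ord t ((QhU * N * (TL * TU)).submatrix H' J).det +
        ((wt r μ H' - wt r μ I : ℕ) : ℕ∞) with hf
    have hne : ({m : ℕ∞ | ∃ H' : Fin k → Fin r, StrictMono H' ∧ (∀ s, H' s ≤ I s) ∧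
        m = ord t ((QhU * N * (TL * TU)).submatrix H' J).det +
          ((wt r μ H' - wt r μ I : ℕ) : ℕ∞)}).Nonempty :=
      ⟨f I, I, hI, fun s => le_refl _, rfl⟩
    have hfin : ({m : ℕ∞ | ∃ H' : Fin k → Fin r, StrictMono H' ∧ (∀ s, H' s ≤ I s) ∧
        m = ord t ((QhU * N * (TL * TU)).submatrix H' J).det +
          ((wt r μ H' - wt r μ I : ℕ) : ℕ∞)}).Finite := by
      apply Set.Finite.subset (Set.finite_range f)
      rintro m ⟨H', -, -, rfl⟩
      exact ⟨H', rfl⟩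
    obtain ⟨H', hH', hH'I, hval⟩ := hne.csInf_mem hfin
    have h1 : wt r μ I ≤ wt r μ H' := wt_mono μ hμ H' I hH'I
    have h2 : wt r μ H ≤ wt r μ I := wt_mono μ hμ I H hIH
    calc sInf {m : ℕ∞ | ∃ H'' : Fin k → Fin r, StrictMono H'' ∧ (∀ s, H'' s ≤ H s) ∧
          m = ord t ((QhU * N * (TL * TU)).submatrix H'' J).det +
            ((wt r μ H'' - wt r μ H : ℕ) : ℕ∞)}
        ≤ ord t ((QhU * N * (TL * TU)).submatrix H' J).det +
            ((wt r μ H' - wt r μ H : ℕ) : ℕ∞) :=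
          sInf_le ⟨H', hH', fun s => le_trans (hH'I s) (hIH s), rfl⟩
      _ = (ord t ((QhU * N * (TL * TU)).submatrix H' J).det +
            ((wt r μ H' - wt r μ I : ℕ) : ℕ∞)) + ((wt r μ I - wt r μ H : ℕ) : ℕ∞) := by
          rw [add_assoc, ← Nat.cast_add]
          congr 2
          omega
      _ = sInf {m : ℕ∞ | ∃ H'' : Fin k → Fin r, StrictMono H'' ∧ (∀ s, H'' s ≤ I s) ∧
            m = ord t ((QhU * N * (TL * TU)).submatrix H'' J).det +
              ((wt r μ H'' - wt r μ I : ℕ) : ℕ∞)} + ((wt r μ I - wt r μ H : ℕ) : ℕ∞) := by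
          rw [← hval]
end

section
/- Let N* be a μ-generic r×r matrix over R and let λ = (λ_1,…,λ_r) = inv(D_μ·N*). Then for every 1 ≤ j ≤ r, the minor of N* using rows j, j+1, …, r and columns j, j+1, …, r has order (λ_j − μ_j) + (λ_{j+1} − μ_{j+1}) + ⋯ + (λ_r − μ_r). -/
open Matrix

section Aux

open Matrix Finset

/-- Every nonempty set of `ℕ∞` contains its infimum. -/
lemma enat_sInf_mem {s : Set ℕ∞} (hs : s.Nonempty) : sInf s ∈ s := by
  obtain ⟨a, has, hmin⟩ := wellFounded_lt.has_min s hs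
  have h : sInf s = a :=
    le_antisymm (sInf_le has) (le_sInf fun b hb => not_lt.1 (hmin b hb))
  rw [h]; exact has

section OrdLemmas

variable {R : Type*} [CommRing R] [IsDomain R] {t : R}

lemma ord_def (a : R) : ord t a = emultiplicity t a := rfl

lemma ord_mul (hp : Prime t) (a b : R) : ord t (a * b) = ord t a + ord t b :=
  emultiplicity_mul hp

lemma ord_pow_mul (hp : Prime t) (n : ℕ) (a : R) :
    ord t (t ^ n * a) = (n : ℕ∞) + ord t a := by
  rw [ord_def, emultiplicity_mul hp, emultiplicity_pow_self hp.ne_zero hp.not_unit]; rfl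

lemma ord_le_mul_left (hp : Prime t) (a b : R) : ord t b ≤ ord t (a * b) := by
  rw [ord_mul hp]; exact le_add_self

lemma ord_sum_le (hp : Prime t) {ι : Type*} (s : Finset ι) (f : ι → R) (x : R)
    (h : ∀ i ∈ s, ord t x ≤ ord t (f i)) : ord t x ≤ ord t (∑ i ∈ s, f i) :=
  emultiplicity_le_emultiplicity_iff.2 fun n hn => Finset.dvd_sum fun i hi =>
    pow_dvd_of_le_emultiplicity ((pow_dvd_iff_le_emultiplicity.1 hn).trans (h i hi))

lemma ord_unit_mul {u : R} (hu : IsUnit u) (a : R) : ord t (u * a) = ord t a := by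
  obtain ⟨v, hv⟩ := hu.exists_left_inv
  refine le_antisymm ?_ ?_
  · exact emultiplicity_le_emultiplicity_of_dvd_right
      ⟨v, by rw [mul_comm (u * a) v, ← mul_assoc, hv, one_mul]⟩
  · exact emultiplicity_le_emultiplicity_of_dvd_right (dvd_mul_left a u)

end OrdLemmas

/-- Monotone consequence of a step-by-step antitone hypothesis. -/
lemma antitone_step {f : ℕ → ℕ} {r : ℕ} (hf : ∀ i, 1 ≤ i → i < r → f (i + 1) ≤ f i) :
    ∀ a b : ℕ, 1 ≤ a → a ≤ b → b ≤ r → f b ≤ f a := by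
  intro a b ha hab hbr
  induction b with
  | zero => omega
  | succ n ih =>
    rcases Nat.lt_or_ge a (n + 1) with h | h
    · exact le_trans (hf n (by omega) (by omega)) (ih (by omega) (by omega))
    · have hh : a = n + 1 := by omega
      rw [hh]

lemma lastCols_strictMono {r k : ℕ} (h : k ≤ r) : StrictMono (lastCols r k h) := by
  intro a b hab
  have : a.1 < b.1 := hab
  simp only [lastCols, Fin.lt_def]
  omega

lemma strictMono_le_lastCols {k r : ℕ} {S : Fin k → Fin r} (hS : StrictMono S)
    (h : k ≤ r) (p : Fin k) : S p ≤ lastCols r k h p := by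
  have key : ∀ d (hd : p.1 + d < k), (S p).1 + d ≤ (S ⟨p.1 + d, hd⟩).1 := by
    intro d
    induction d with
    | zero =>
      intro hd
      have he : (⟨p.1 + 0, hd⟩ : Fin k) = p := by ext; simp
      rw [he]
      omega
    | succ n ih =>
      intro hd
      have hn : p.1 + n < k := by omega
      have h1 := ih hn
      have h2 : S ⟨p.1 + n, hn⟩ < S ⟨p.1 + (n + 1), hd⟩ :=
        hS (by rw [Fin.mk_lt_mk]; omega)
      have h3 : (S ⟨p.1 + n, hn⟩).1 < (S ⟨p.1 + (n + 1), hd⟩).1 := h2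
      omega
  have hpk : p.1 < k := p.isLt
  have h3 := key (k - 1 - p.1) (by omega)
  have h4 : (S ⟨p.1 + (k - 1 - p.1), by omega⟩).1 < r := (S _).isLt
  rw [Fin.le_def]
  simp only [lastCols]
  omega

/-- Any injective tuple can be reordered into a strictly monotone one. -/
lemma exists_perm_comp_strictMono {k m : ℕ} {φ : Fin k → Fin m}
    (hφ : Function.Injective φ) :
    ∃ σ : Equiv.Perm (Fin k), StrictMono (φ ∘ σ) := by
  classical
  set s : Finset (Fin m) := Finset.image φ Finset.univ with hs
  have hcard : s.card = k := by
    rw [hs, Finset.card_image_of_injective _ hφ, Finset.card_univ, Fintype.card_fin]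
  have hmem : ∀ p, φ p ∈ s := fun p => Finset.mem_image_of_mem _ (Finset.mem_univ p)
  have hbij : Function.Bijective (fun p : Fin k => (⟨φ p, hmem p⟩ : s)) := by
    rw [Fintype.bijective_iff_injective_and_card]
    exact ⟨fun a b hab => hφ (congrArg Subtype.val hab),
      by simp [Fintype.card_coe, hcard]⟩
  let e := Equiv.ofBijective _ hbij
  refine ⟨(s.orderIsoOfFin hcard).toEquiv.trans e.symm, ?_⟩
  have h3 : ∀ x : s, φ (e.symm x) = ↑x := fun x => by
    rw [show φ (e.symm x) = ↑(e (e.symm x)) from rfl, e.apply_symm_apply]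
  have hfun : φ ∘ ((s.orderIsoOfFin hcard).toEquiv.trans e.symm)
      = fun p => (s.orderEmbOfFin hcard p : Fin m) := by
    funext p
    simp only [Function.comp, Equiv.trans_apply]
    rw [h3]
    exact Finset.coe_orderIsoOfFin_apply s hcard p
  rw [hfun]
  exact fun a b hab => (s.orderEmbOfFin hcard).strictMono hab

/-- Row-expansion (half of Cauchy–Binet): a minor of a product expanded over rows. -/
lemma det_mul_submatrix {S : Type*} [CommRing S] {m n : ℕ}
    (A B : Matrix (Fin m) (Fin m) S) (I J : Fin n → Fin m) :
    ((A * B).submatrix I J).det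
      = ∑ φ : Fin n → Fin m, (∏ i, A (I i) (φ i)) * ((B.submatrix φ J).det) := by
  classical
  have hrows : ((A * B).submatrix I J)
      = fun i => ∑ l : Fin m, (A (I i) l • fun j : Fin n => B l (J j)) := by
    funext i j
    simp [Matrix.mul_apply, Finset.sum_apply]
  calc ((A * B).submatrix I J).det
      = (Matrix.detRowAlternating : (Fin n → S) [⋀^Fin n]→ₗ[S] S).toMultilinearMap
          (fun i => ∑ l : Fin m, (A (I i) l • fun j : Fin n => B l (J j))) := by
        rw [← hrows]; rfl
    _ = ∑ φ : Fin n → Fin m,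
          (Matrix.detRowAlternating : (Fin n → S) [⋀^Fin n]→ₗ[S] S).toMultilinearMap
            (fun i => A (I i) (φ i) • fun j : Fin n => B (φ i) (J j)) :=
        MultilinearMap.map_sum _ _
    _ = ∑ φ : Fin n → Fin m, (∏ i, A (I i) (φ i)) * ((B.submatrix φ J).det) := by
        refine Finset.sum_congr rfl fun φ _ => ?_
        rw [MultilinearMap.map_smul_univ]
        simp only [smul_eq_mul]
        rfl

/-- Column-expansion variant. -/
lemma det_mul_submatrix_right {S : Type*} [CommRing S] {m n : ℕ}
    (A B : Matrix (Fin m) (Fin m) S) (I J : Fin n → Fin m) :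
    ((A * B).submatrix I J).det
      = ∑ ψ : Fin n → Fin m, (∏ i, B (ψ i) (J i)) * ((A.submatrix I ψ).det) := by
  rw [← Matrix.det_transpose, Matrix.transpose_submatrix, Matrix.transpose_mul,
    det_mul_submatrix]
  refine Finset.sum_congr rfl fun ψ _ => ?_
  rw [← Matrix.det_transpose (A.submatrix I ψ), Matrix.transpose_submatrix]
  rfl

lemma isUnit_sign_cast {S : Type*} [CommRing S] {k : ℕ} (σ : Equiv.Perm (Fin k)) :
    IsUnit (((Equiv.Perm.sign σ : ℤˣ) : ℤ) : S) := by
  rcases Int.units_eq_one_or (Equiv.Perm.sign σ) with h | h <;> simp [h]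

/-- The main computation: for a matrix `W` satisfying the genericity identities (E2), (E3),
whose `μ`-twist `D_μ W` has Smith invariants `lam`, the corner minor order is as expected. -/
lemma corner_main {R : Type*} [CommRing R] [IsDomain R] {t : R} (hp : Prime t)
    (r : ℕ) (μ lam : ℕ → ℕ)
    (hμ : ∀ i, 1 ≤ i → i < r → μ (i + 1) ≤ μ i)
    (hlam_mono : ∀ i, 1 ≤ i → i < r → lam (i + 1) ≤ lam i)
    (W Y Z : Matrix (Fin r) (Fin r) R)
    (P Q : Matrix (Fin r) (Fin r) R) (hPdet : IsUnit P.det) (hQdet : IsUnit Q.det)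
    (hPQ : P * (Dmu t r μ * W) * Q = Dmu t r lam)
    (k : ℕ) (hkr : k ≤ r)
    (hE2 : ∀ I J : Fin k → Fin r, StrictMono I → StrictMono J →
      ord t ((W.submatrix I J).det) =
        sInf {m : ℕ∞ | ∃ H : Fin k → Fin r, StrictMono H ∧ (∀ s, H s ≤ I s) ∧
          m = ord t ((Y.submatrix H J).det) + ((wt r μ H - wt r μ I : ℕ) : ℕ∞)})
    (hE3 : ∀ I J : Fin k → Fin r, StrictMono I → StrictMono J →
      ord t ((W.submatrix I J).det) =
        sInf {m : ℕ∞ | ∃ H : Fin k → Fin r, StrictMono H ∧ (∀ s, H s ≤ J s) ∧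
          m = ord t ((Z.submatrix I H).det)}) :
    ord t ((W.submatrix (lastCols r k hkr) (lastCols r k hkr)).det)
        + ((wt r μ (lastCols r k hkr) : ℕ) : ℕ∞)
      = ((wt r lam (lastCols r k hkr) : ℕ) : ℕ∞) := by
  classical
  obtain ⟨c, hc⟩ : ∃ c, c = lastCols r k hkr := ⟨_, rfl⟩
  rw [← hc]
  have hcSM : StrictMono c := hc ▸ lastCols_strictMono hkr
  have hcmax : ∀ (S : Fin k → Fin r), StrictMono S → ∀ p, S p ≤ c p :=
    fun S hS p => hc ▸ strictMono_le_lastCols hS hkr p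
  obtain ⟨X, hX⟩ : ∃ X, X = Dmu t r μ * W := ⟨_, rfl⟩
  rw [← hX] at hPQ
  -- diagonal factorization of minors of X
  have hdiag : ∀ (S H : Fin k → Fin r),
      X.submatrix S H = Matrix.diagonal (fun p => t ^ μ ((S p).1 + 1)) * (W.submatrix S H) := by
    intro S H
    ext p q
    simp [hX, Dmu, Matrix.diagonal_mul]
  have H1 : ∀ S H : Fin k → Fin r,
      ord t ((X.submatrix S H).det) = ((wt r μ S : ℕ) : ℕ∞) + ord t ((W.submatrix S H).det) := by
    intro S H
    rw [hdiag S H, Matrix.det_mul, Matrix.det_diagonal, Finset.prod_pow_eq_pow_sum,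
      ord_pow_mul hp]
    rfl
  -- weights are antitone
  have hwt : ∀ (f : ℕ → ℕ), (∀ i, 1 ≤ i → i < r → f (i + 1) ≤ f i) →
      ∀ (S H : Fin k → Fin r), (∀ p, H p ≤ S p) →
      (∑ p : Fin k, f ((S p).1 + 1)) ≤ ∑ p : Fin k, f ((H p).1 + 1) := by
    intro f hf S H hle
    refine Finset.sum_le_sum fun p _ => ?_
    exact antitone_step hf ((H p).1 + 1) ((S p).1 + 1) (by omega)
      (Nat.succ_le_succ (Fin.le_def.mp (hle p)))
      (by have := (S p).isLt; omega)
  -- E3 step: the corner column set minimizes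
  have H4 : ∀ S H : Fin k → Fin r, StrictMono S → StrictMono H →
      ord t ((W.submatrix S c).det) ≤ ord t ((W.submatrix S H).det) := by
    intro S H hS hH
    rw [hE3 S c hS hcSM, hE3 S H hS hH]
    apply sInf_le_sInf
    rintro m ⟨H', hH', hle, rfl⟩
    exact ⟨H', hH', fun s => hcmax H' hH' s, rfl⟩
  -- E2 step: the corner row set minimizes after weighting
  have H5 : ∀ S : Fin k → Fin r, StrictMono S →
      ((wt r μ c : ℕ) : ℕ∞) + ord t ((W.submatrix c c).det)
        ≤ ((wt r μ S : ℕ) : ℕ∞) + ord t ((W.submatrix S c).det) := by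
    intro S hS
    have hne : Set.Nonempty {m : ℕ∞ | ∃ H : Fin k → Fin r, StrictMono H ∧ (∀ s, H s ≤ S s) ∧
        m = ord t ((Y.submatrix H c).det) + ((wt r μ H - wt r μ S : ℕ) : ℕ∞)} :=
      ⟨_, S, hS, fun s => le_refl _, rfl⟩
    have hmem := enat_sInf_mem hne
    rw [← hE2 S c hS hcSM] at hmem
    obtain ⟨H₀, hH₀, hH₀S, heq⟩ := hmem
    have hwtS : wt r μ S ≤ wt r μ H₀ := hwt μ hμ S H₀ hH₀S
    have hwtc : wt r μ c ≤ wt r μ H₀ :=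
      hwt μ hμ c H₀ (fun p => le_trans (hH₀S p) (hcmax S hS p))
    have hcc_le : ord t ((W.submatrix c c).det)
        ≤ ord t ((Y.submatrix H₀ c).det) + ((wt r μ H₀ - wt r μ c : ℕ) : ℕ∞) := by
      rw [hE2 c c hcSM hcSM]
      exact sInf_le ⟨H₀, hH₀, fun s => le_trans (hH₀S s) (hcmax S hS s), rfl⟩
    have e1 : ((wt r μ c : ℕ) : ℕ∞) + ((wt r μ H₀ - wt r μ c : ℕ) : ℕ∞)
        = ((wt r μ H₀ : ℕ) : ℕ∞) := by
      rw [← Nat.cast_add]; congr 1; omega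
    have e2 : ((wt r μ S : ℕ) : ℕ∞) + ((wt r μ H₀ - wt r μ S : ℕ) : ℕ∞)
        = ((wt r μ H₀ : ℕ) : ℕ∞) := by
      rw [← Nat.cast_add]; congr 1; omega
    calc ((wt r μ c : ℕ) : ℕ∞) + ord t ((W.submatrix c c).det)
        ≤ ((wt r μ c : ℕ) : ℕ∞)
            + (ord t ((Y.submatrix H₀ c).det) + ((wt r μ H₀ - wt r μ c : ℕ) : ℕ∞)) :=
          add_le_add_right hcc_le _
      _ = ((wt r μ H₀ : ℕ) : ℕ∞) + ord t ((Y.submatrix H₀ c).det) := by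
          rw [add_comm (ord t ((Y.submatrix H₀ c).det)) _, ← add_assoc, e1]
      _ = ((wt r μ S : ℕ) : ℕ∞) + ord t ((W.submatrix S c).det) := by
          rw [heq, add_comm (ord t ((Y.submatrix H₀ c).det)) _, ← add_assoc, e2]
  -- corner minimality among strictly monotone minors of X
  have H6 : ∀ S H : Fin k → Fin r, StrictMono S → StrictMono H →
      ord t ((X.submatrix c c).det) ≤ ord t ((X.submatrix S H).det) := by
    intro S H hS hH
    rw [H1 c c, H1 S H]
    exact le_trans (H5 S hS) (add_le_add_right (H4 S H hS hH) _)
  -- corner minimality among all minors of X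
  have H7 : ∀ φ ψ : Fin k → Fin r,
      ord t ((X.submatrix c c).det) ≤ ord t ((X.submatrix φ ψ).det) := by
    intro φ ψ
    by_cases hφ : Function.Injective φ
    · by_cases hψ : Function.Injective ψ
      · obtain ⟨σ, hσ⟩ := exists_perm_comp_strictMono hφ
        obtain ⟨τ, hτ⟩ := exists_perm_comp_strictMono hψ
        have hsub : X.submatrix φ ψ
            = ((X.submatrix (φ ∘ σ) (ψ ∘ τ)).submatrix id ⇑τ.symm).submatrix ⇑σ.symm id := by
          ext p q
          simp [Matrix.submatrix_apply]
        rw [hsub, Matrix.det_permute, ord_unit_mul (isUnit_sign_cast _),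
          Matrix.det_permute', ord_unit_mul (isUnit_sign_cast _)]
        exact H6 _ _ hσ hτ
      · obtain ⟨a, b, hab, hne⟩ := Function.not_injective_iff.mp hψ
        have hz : (X.submatrix φ ψ).det = 0 :=
          Matrix.det_zero_of_column_eq hne (fun i => by simp [hab])
        rw [hz, ord_def (0 : R), emultiplicity_zero]
        exact le_top
    · obtain ⟨a, b, hab, hne⟩ := Function.not_injective_iff.mp hφ
      have hz : (X.submatrix φ ψ).det = 0 :=
        Matrix.det_zero_of_row_eq hne (funext fun q => by simp [hab])
      rw [hz, ord_def (0 : R), emultiplicity_zero]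
      exact le_top
  -- the Smith form corner minor
  have hDlamsub : (Dmu t r lam).submatrix c c
      = Matrix.diagonal (fun p => t ^ lam ((c p).1 + 1)) := by
    ext p q
    rcases eq_or_ne p q with rfl | hpq
    · simp [Dmu]
    · have hcne : c p ≠ c q := fun h => hpq (hcSM.injective h)
      simp [Dmu, Matrix.diagonal_apply_ne _ hcne, Matrix.diagonal_apply_ne _ hpq]
  have hdetDlam : ((Dmu t r lam).submatrix c c).det = t ^ (wt r lam c) := by
    rw [hDlamsub, Matrix.det_diagonal, Finset.prod_pow_eq_pow_sum]
    rfl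
  -- upper bound
  have hupper : ord t ((X.submatrix c c).det) ≤ ((wt r lam c : ℕ) : ℕ∞) := by
    have hL : ((wt r lam c : ℕ) : ℕ∞) = ord t (((Dmu t r lam).submatrix c c).det) := by
      rw [hdetDlam, ord_def, emultiplicity_pow_self hp.ne_zero hp.not_unit]
    have e1 : ((Dmu t r lam).submatrix c c).det
        = ∑ φ : Fin k → Fin r, (∏ i, P (c i) (φ i)) * (((X * Q).submatrix φ c).det) := by
      rw [← hPQ, mul_assoc, det_mul_submatrix]
    rw [hL, e1]
    apply ord_sum_le hp
    intro φ _
    refine le_trans ?_ (ord_le_mul_left hp _ _)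
    have e2 : ((X * Q).submatrix φ c).det
        = ∑ ψ : Fin k → Fin r, (∏ i, Q (ψ i) (c i)) * ((X.submatrix φ ψ).det) :=
      det_mul_submatrix_right X Q φ c
    rw [e2]
    apply ord_sum_le hp
    intro ψ _
    exact le_trans (H7 φ ψ) (ord_le_mul_left hp _ _)
  -- lower bound
  have hPu : IsUnit P := (Matrix.isUnit_iff_isUnit_det P).2 hPdet
  have hQu : IsUnit Q := (Matrix.isUnit_iff_isUnit_det Q).2 hQdet
  have hP'P : (↑hPu.unit⁻¹ : Matrix (Fin r) (Fin r) R) * P = 1 := hPu.val_inv_mul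
  have hQQ' : Q * (↑hQu.unit⁻¹ : Matrix (Fin r) (Fin r) R) = 1 := hQu.mul_val_inv
  have hXeq : (↑hPu.unit⁻¹ : Matrix (Fin r) (Fin r) R)
      * (Dmu t r lam * (↑hQu.unit⁻¹ : Matrix (Fin r) (Fin r) R)) = X := by
    rw [← hPQ]
    calc (↑hPu.unit⁻¹ : Matrix (Fin r) (Fin r) R)
        * ((P * X * Q) * (↑hQu.unit⁻¹ : Matrix (Fin r) (Fin r) R))
        = (↑hPu.unit⁻¹ : Matrix (Fin r) (Fin r) R)
            * ((P * X) * (Q * (↑hQu.unit⁻¹ : Matrix (Fin r) (Fin r) R))) := by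
          rw [mul_assoc (P * X) Q]
      _ = (↑hPu.unit⁻¹ : Matrix (Fin r) (Fin r) R) * (P * X) := by rw [hQQ', mul_one]
      _ = ((↑hPu.unit⁻¹ : Matrix (Fin r) (Fin r) R) * P) * X := by rw [mul_assoc]
      _ = X := by rw [hP'P, one_mul]
  have hlower : ((wt r lam c : ℕ) : ℕ∞) ≤ ord t ((X.submatrix c c).det) := by
    refine le_emultiplicity_of_pow_dvd ?_
    rw [← hXeq, det_mul_submatrix]
    apply Finset.dvd_sum
    intro φ _
    refine Dvd.dvd.mul_left ?_ _
    have hsub2 : ((Dmu t r lam * (↑hQu.unit⁻¹ : Matrix (Fin r) (Fin r) R)).submatrix φ c)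
        = Matrix.diagonal (fun p => t ^ lam ((φ p).1 + 1))
            * ((↑hQu.unit⁻¹ : Matrix (Fin r) (Fin r) R).submatrix φ c) := by
      ext p q
      simp [Dmu, Matrix.diagonal_mul]
    rw [hsub2, Matrix.det_mul, Matrix.det_diagonal, Finset.prod_pow_eq_pow_sum]
    by_cases hφ : Function.Injective φ
    · refine Dvd.dvd.mul_right (pow_dvd_pow t ?_) _
      obtain ⟨σ, hσ⟩ := exists_perm_comp_strictMono hφ
      have hsum : (∑ p : Fin k, lam ((φ p).1 + 1))
          = ∑ p : Fin k, lam ((φ (σ p)).1 + 1) :=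
        (Equiv.sum_comp σ (fun p => lam ((φ p).1 + 1))).symm
      show wt r lam c ≤ ∑ p : Fin k, lam ((φ p).1 + 1)
      rw [hsum]
      refine Finset.sum_le_sum fun p _ => ?_
      refine antitone_step hlam_mono ((φ (σ p)).1 + 1) ((c p).1 + 1) (by omega)
        (Nat.succ_le_succ (Fin.le_def.mp (hcmax (φ ∘ σ) hσ p)))
        (by have := (c p).isLt; omega)
    · obtain ⟨a, b, hab, hne⟩ := Function.not_injective_iff.mp hφ
      have hz : ((↑hQu.unit⁻¹ : Matrix (Fin r) (Fin r) R).submatrix φ c).det = 0 :=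
        Matrix.det_zero_of_row_eq hne (funext fun q => by simp [hab])
      rw [hz, mul_zero]
      exact dvd_zero _
  have hXcc : ord t ((X.submatrix c c).det) = ((wt r lam c : ℕ) : ℕ∞) :=
    le_antisymm hupper hlower
  have hfin := H1 c c
  rw [hXcc] at hfin
  rw [add_comm]
  exact hfin.symm

end Aux

theorem stmt10 {R : Type*} [CommRing R] [IsDomain R] [IsDiscreteValuationRing R]
    [CharZero (IsLocalRing.ResidueField R)]
    (t : R) (ht : Irreducible t) (r : ℕ) (μ : ℕ → ℕ)
    (hμ : ∀ i, 1 ≤ i → i < r → μ (i + 1) ≤ μ i)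
    (Nstar : Matrix (Fin r) (Fin r) R) (hgen : MuGeneric t r μ Nstar)
    (lam : ℕ → ℕ) (hlam : SmithInv t r (Dmu t r μ * Nstar) lam)
    (j : ℕ) (hj1 : 1 ≤ j) (hjr : j ≤ r) :
    dMinor t Nstar 0 j + ((∑ i ∈ Finset.Icc j r, μ i : ℕ) : ℕ∞) =
      ((∑ i ∈ Finset.Icc j r, lam i : ℕ) : ℕ∞) := by
  classical
  have hp : Prime t := UniqueFactorizationMonoid.irreducible_iff_prime.mp ht
  obtain ⟨hlam_mono, P, Q, hPdet, hQdet, hPQ⟩ := hlam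
  obtain ⟨N, hN0, QU, QL, TL, TU, QhL, QhU, hfact, -, -, -, -, -, -, -, -, -, -, -, -,
    -, -, hE⟩ := hgen
  rw [← hfact] at hE
  have hr1 : 1 ≤ r := le_trans hj1 hjr
  have hset : rowsSet r 0 j = Finset.Ici (⟨j - 1, by omega⟩ : Fin r) := by
    ext x
    simp only [rowsSet, Finset.mem_filter, Finset.mem_univ, true_and, Finset.mem_Ici,
      Fin.le_def]
    omega
  have hK : (rowsSet r 0 j).card = r - j + 1 := by
    rw [hset, Fin.card_Ici]
    show r - (j - 1) = r - j + 1
    omega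
  have hKr : (rowsSet r 0 j).card ≤ r := by omega
  have hemb : ⇑((rowsSet r 0 j).orderEmbOfFin rfl)
      = lastCols r (rowsSet r 0 j).card hKr := by
    refine (Finset.orderEmbOfFin_unique rfl ?_ ?_).symm
    · intro x
      have hx := x.isLt
      have hmem : lastCols r (rowsSet r 0 j).card hKr x
          ∈ Finset.Ici (⟨j - 1, by omega⟩ : Fin r) := by
        rw [Finset.mem_Ici]
        show (⟨j - 1, by omega⟩ : Fin r) ≤ ⟨r - (rowsSet r 0 j).card + x.1, _⟩
        rw [Fin.mk_le_mk]
        omega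
      rwa [← hset] at hmem
    · exact lastCols_strictMono hKr
  have hlc : ∀ p : Fin ((rowsSet r 0 j).card),
      (lastCols r (rowsSet r 0 j).card hKr p).1 + 1 = j + p.1 := by
    intro p
    have hx := p.isLt
    simp [lastCols]
    omega
  have hsum : ∀ f : ℕ → ℕ, (∑ i ∈ Finset.Icc j r, f i)
      = wt r f (lastCols r (rowsSet r 0 j).card hKr) := by
    intro f
    rw [← Finset.Ico_add_one_right_eq_Icc, Finset.sum_Ico_eq_sum_range]
    have hrange : r + 1 - j = (rowsSet r 0 j).card := by omega
    rw [hrange, ← Fin.sum_univ_eq_sum_range (fun p => f (j + p)) ((rowsSet r 0 j).card)]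
    unfold wt
    refine Finset.sum_congr rfl fun p _ => ?_
    rw [hlc p]
  have hdm : dMinor t Nstar 0 j
      = ord t ((Nstar.submatrix (lastCols r (rowsSet r 0 j).card hKr)
          (lastCols r (rowsSet r 0 j).card hKr)).det) := by
    unfold dMinor rsMinor
    rw [hemb]
  rw [hdm, hsum μ, hsum lam]
  exact corner_main hp r μ lam hμ hlam_mono Nstar (QhU * N * (TL * TU)) (QU * QL * N * TL)
    P Q hPdet hQdet hPQ ((rowsSet r 0 j).card) hKr
    (fun I J hI hJ => (hE _ hKr I J hI hJ).2.1)
    (fun I J hI hJ => (hE _ hKr I J hI hJ).2.2)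
end

section
/- Let N* be a μ-generic r×r matrix over R. Then for all 1 ≤ i ≤ j ≤ r, with all minors taken using the indicated rows and the last columns matching the number of rows: ‖N*(rows {1,…,j−i} ∪ {j,…,r})‖ + ‖N*(rows {1,…,j−i} ∪ {j+1,…,r})‖ ≤ ‖N*(rows {1,…,j−i−1} ∪ {j,…,r})‖ + ‖N*(rows {1,…,j−i+1} ∪ {j+1,…,r})‖. Equivalently, the integers k_{ij} defined from N* by the determinantal formula satisfy k_{ij} ≥ 0 for all 1 ≤ i ≤ j ≤ r. -/
open Matrix

section Aux

open Matrix

variable {R : Type*} [CommRing R]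

lemma upperTri_mul {r : ℕ} {A B : Matrix (Fin r) (Fin r) R} (hA : UpperTri A)
    (hB : UpperTri B) : UpperTri (A * B) := by
  intro i j hij
  rw [Matrix.mul_apply]
  apply Finset.sum_eq_zero
  intro x _
  rcases lt_or_ge x i with h | h
  · rw [hA i x h, zero_mul]
  · rw [hB x j (lt_of_lt_of_le hij h), mul_zero]

lemma UpperTri.det_eq {r : ℕ} {M : Matrix (Fin r) (Fin r) R} (h : UpperTri M) :
    M.det = ∏ i, M i i :=
  Matrix.det_of_upperTriangular (fun i j hij => h i j hij)

/-- combined embedding: top rows given by `φ`, bottom rows `c, c+1, …, r-1`. -/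
def comb {r : ℕ} (c a : ℕ) (hc : c ≤ r) (φ : Fin a → Fin r) :
    Fin (a + (r - c)) → Fin r :=
  fun x => if h : x.1 < a then φ ⟨x.1, h⟩ else ⟨c + (x.1 - a), by have := x.isLt; omega⟩

lemma comb_val_lt {r c a : ℕ} (hc : c ≤ r) (φ : Fin a → Fin r)
    {x : Fin (a + (r - c))} (h : x.1 < a) : comb c a hc φ x = φ ⟨x.1, h⟩ := dif_pos h

lemma comb_val_ge {r c a : ℕ} (hc : c ≤ r) (φ : Fin a → Fin r)
    {x : Fin (a + (r - c))} (h : ¬ x.1 < a) :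
    comb c a hc φ x = ⟨c + (x.1 - a), by have := x.isLt; omega⟩ := dif_neg h

lemma comb_strictMono {r c a : ℕ} (hc : c ≤ r) {φ : Fin a → Fin r} (hφ : StrictMono φ)
    (hφc : ∀ p, (φ p).1 < c) : StrictMono (comb c a hc φ) := by
  intro x y hxy
  have hxy' : x.1 < y.1 := hxy
  rcases lt_or_ge x.1 a with hx | hx
  · rcases lt_or_ge y.1 a with hy | hy
    · rw [comb_val_lt hc φ hx, comb_val_lt hc φ hy]
      exact hφ (show (⟨x.1, hx⟩ : Fin a) < ⟨y.1, hy⟩ from hxy')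
    · rw [comb_val_lt hc φ hx, comb_val_ge hc φ (by omega)]
      have := hφc ⟨x.1, hx⟩
      show (φ ⟨x.1, hx⟩).1 < c + (y.1 - a)
      omega
  · rw [comb_val_ge hc φ (by omega), comb_val_ge hc φ (by omega)]
    show c + (x.1 - a) < c + (y.1 - a)
    omega

lemma comb_apply_left {r c a : ℕ} (hc : c ≤ r) (φ : Fin a → Fin r) (p : Fin a) :
    comb c a hc φ (finSumFinEquiv (Sum.inl p)) = φ p := by
  rw [finSumFinEquiv_apply_left, comb_val_lt hc φ (show (Fin.castAdd _ p).1 < a from p.isLt)]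
  congr 1

lemma comb_apply_right {r c a : ℕ} (hc : c ≤ r) (φ : Fin a → Fin r) (p : Fin (r - c)) :
    comb c a hc φ (finSumFinEquiv (Sum.inr p)) =
      ⟨c + p.1, by have := p.isLt; omega⟩ := by
  rw [finSumFinEquiv_apply_right,
    comb_val_ge hc φ (show ¬ (Fin.natAdd a p).1 < a by simp [Fin.natAdd])]
  exact Fin.ext (show c + ((Fin.natAdd a p).1 - a) = c + p.1 by
    simp only [Fin.coe_natAdd]; omega)

lemma lastCols_apply_left {r c a : ℕ} (hra : a + (r - c) ≤ r) (hac : a ≤ c) (hc : c ≤ r)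
    (q : Fin a) :
    lastCols r (a + (r - c)) hra (finSumFinEquiv (Sum.inl q)) =
      ⟨c - a + q.1, by have := q.isLt; omega⟩ := by
  rw [finSumFinEquiv_apply_left]
  exact Fin.ext (show r - (a + (r - c)) + (Fin.castAdd _ q).1 = c - a + q.1 by
    simp only [Fin.coe_castAdd]; omega)

lemma lastCols_apply_right {r c a : ℕ} (hra : a + (r - c) ≤ r) (hac : a ≤ c) (hc : c ≤ r)
    (q : Fin (r - c)) :
    lastCols r (a + (r - c)) hra (finSumFinEquiv (Sum.inr q)) =
      ⟨c + q.1, by have := q.isLt; omega⟩ := by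
  rw [finSumFinEquiv_apply_right]
  exact Fin.ext (show r - (a + (r - c)) + (Fin.natAdd a q).1 = c + q.1 by
    simp only [Fin.coe_natAdd]; omega)

lemma rsMinor_eq_det {r : ℕ} (W : Matrix (Fin r) (Fin r) R) (s : Finset (Fin r)) {k : ℕ}
    (hk : s.card = k) (hkr : k ≤ r) (φ : Fin k → Fin r) (hmem : ∀ p, φ p ∈ s)
    (hmono : StrictMono φ) :
    rsMinor W s = (W.submatrix φ (lastCols r k hkr)).det := by
  subst hk
  rw [rsMinor, ← Finset.orderEmbOfFin_unique rfl hmem hmono]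

lemma rowsSet_card {r a b : ℕ} (hab : a < b) (hbr : b ≤ r + 1) :
    (rowsSet r a b).card = a + (r - (b - 1)) := by
  classical
  have hc : b - 1 ≤ r := by omega
  set φ : Fin (a + (r - (b - 1))) → Fin r :=
    comb (b - 1) a hc (fun p => ⟨p.1, by have := p.isLt; omega⟩) with hφ
  have hmono : StrictMono φ :=
    comb_strictMono hc (fun p q h => show p.1 < q.1 from h)
      (fun p => show p.1 < b - 1 from by have := p.isLt; omega)
  have himg : rowsSet r a b = Finset.image φ Finset.univ := by
    ext y
    simp only [rowsSet, Finset.mem_filter, Finset.mem_univ, true_and, Finset.mem_image]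
    constructor
    · rintro (hy | hy)
      · refine ⟨⟨y.1, by have := y.isLt; omega⟩, ?_⟩
        rw [hφ, comb_val_lt hc _ (show y.1 < a by omega)]
      · refine ⟨⟨a + (y.1 - (b - 1)), by have := y.isLt; omega⟩, ?_⟩
        rw [hφ, comb_val_ge hc _ (show ¬ a + (y.1 - (b - 1)) < a by omega)]
        exact Fin.ext (show (b - 1) + (a + (y.1 - (b - 1)) - a) = y.1 by omega)
    · rintro ⟨x, rfl⟩
      rcases lt_or_ge x.1 a with hx | hx
      · rw [hφ, comb_val_lt hc _ hx]
        left
        show x.1 + 1 ≤ a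
        omega
      · rw [hφ, comb_val_ge hc _ (by omega)]
        right
        show b ≤ (b - 1) + (x.1 - a) + 1
        omega
  rw [himg, Finset.card_image_of_injective _ hmono.injective, Finset.card_univ]
  simp

/-- product of the diagonal entries `W p p` for `p ≥ c`. -/
def diagProd {r : ℕ} (W : Matrix (Fin r) (Fin r) R) (c : ℕ) : R :=
  ∏ p : Fin (r - c), W ⟨c + p.1, by have := p.isLt; omega⟩ ⟨c + p.1, by have := p.isLt; omega⟩

lemma comb_det {r : ℕ} {W : Matrix (Fin r) (Fin r) R} (hW : UpperTri W)
    (c a : ℕ) (hc : c ≤ r) (hac : a ≤ c) (φ : Fin a → Fin r) (hφc : ∀ p, (φ p).1 < c) :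
    (W.submatrix (comb c a hc φ) (lastCols r (a + (r - c)) (by omega))).det
      = (Matrix.of fun p q : Fin a => W (φ p) ⟨c - a + q.1, by have := q.isLt; omega⟩).det
        * diagProd W c := by
  rw [← Matrix.det_submatrix_equiv_self (finSumFinEquiv : Fin a ⊕ Fin (r - c) ≃ _)]
  rw [Matrix.submatrix_submatrix]
  have hra : a + (r - c) ≤ r := by omega
  have hblock : W.submatrix (comb c a hc φ ∘ finSumFinEquiv)
      (lastCols r (a + (r - c)) (by omega) ∘ finSumFinEquiv)
      = Matrix.fromBlocks
          (Matrix.of fun p q : Fin a => W (φ p) ⟨c - a + q.1, by have := q.isLt; omega⟩)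
          (Matrix.of fun (p : Fin a) (q : Fin (r - c)) =>
            W (φ p) ⟨c + q.1, by have := q.isLt; omega⟩)
          0
          (Matrix.of fun p q : Fin (r - c) => W ⟨c + p.1, by have := p.isLt; omega⟩
            ⟨c + q.1, by have := q.isLt; omega⟩) := by
    ext x y
    simp only [Matrix.submatrix_apply, Function.comp_apply]
    cases x with
    | inl p =>
      cases y with
      | inl q =>
        rw [comb_apply_left, lastCols_apply_left _ hac hc]
        rfl
      | inr q =>
        rw [comb_apply_left, lastCols_apply_right _ hac hc]
        rfl
    | inr p =>
      cases y with
      | inl q =>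
        rw [comb_apply_right, lastCols_apply_left _ hac hc]
        show _ = (0 : Matrix (Fin (r-c)) (Fin a) R) p q
        rw [Matrix.zero_apply]
        apply hW
        show c - a + q.1 < c + p.1
        have := q.isLt
        omega
      | inr q =>
        rw [comb_apply_right, lastCols_apply_right _ hac hc]
        rfl
  rw [hblock, Matrix.det_fromBlocks_zero₂₁]
  congr 1
  have htri : UpperTri (Matrix.of fun p q : Fin (r - c) =>
      W ⟨c + p.1, by have := p.isLt; omega⟩ ⟨c + q.1, by have := q.isLt; omega⟩) := by
    intro p q hpq
    apply hW
    show c + q.1 < c + p.1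
    have : q.1 < p.1 := hpq
    omega
  rw [htri.det_eq]
  exact Finset.prod_congr rfl fun p _ => rfl

/-- The master decomposition: right-justified minor of an upper triangular matrix with
rows `φ ∪ {c, …, r-1}`. -/
lemma rsMinor_decomp {r : ℕ} {W : Matrix (Fin r) (Fin r) R} (hW : UpperTri W)
    (a b : ℕ) (hab : a < b) (hbr : b ≤ r + 1) :
    rsMinor W (rowsSet r a b)
      = (Matrix.of fun p q : Fin a =>
            W ⟨p.1, by have := p.isLt; omega⟩
              ⟨b - 1 - a + q.1, by have := q.isLt; omega⟩).det
        * diagProd W (b - 1) := by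
  have hc : b - 1 ≤ r := by omega
  have hac : a ≤ b - 1 := by omega
  set φ0 : Fin a → Fin r := fun p => ⟨p.1, by have := p.isLt; omega⟩ with hφ0
  have hmono : StrictMono (comb (b - 1) a hc φ0) :=
    comb_strictMono hc (fun p q h => show p.1 < q.1 from h)
      (fun p => show p.1 < b - 1 from by have := p.isLt; omega)
  have hmem : ∀ p, comb (b - 1) a hc φ0 p ∈ rowsSet r a b := by
    intro p
    simp only [rowsSet, Finset.mem_filter, Finset.mem_univ, true_and]
    rcases lt_or_ge p.1 a with hp | hp
    · rw [comb_val_lt hc _ hp]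
      left; show p.1 + 1 ≤ a; omega
    · rw [comb_val_ge hc _ (by omega)]
      right; show b ≤ (b - 1) + (p.1 - a) + 1; omega
  rw [rsMinor_eq_det W (rowsSet r a b) (rowsSet_card hab hbr) (by omega)
    (comb (b - 1) a hc φ0) hmem hmono]
  rw [comb_det hW (b - 1) a hc hac φ0
    (fun p => show p.1 < b - 1 from by have := p.isLt; omega)]

lemma comb_det' {r : ℕ} {W : Matrix (Fin r) (Fin r) R} (hW : UpperTri W)
    (c a : ℕ) (hc : c ≤ r) (hac : a ≤ c) (φ : Fin a → Fin r) (hφc : ∀ p, (φ p).1 < c)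
    (A : Matrix (Fin a) (Fin a) R)
    (hA : ∀ (p q : Fin a) (h2 : c - a + q.1 < r), A p q = W (φ p) ⟨c - a + q.1, h2⟩) :
    (W.submatrix (comb c a hc φ) (lastCols r (a + (r - c)) (by omega))).det
      = A.det * diagProd W c := by
  rw [comb_det hW c a hc hac φ hφc]
  congr 2
  apply Matrix.ext
  intro p q
  exact (hA p q _).symm

lemma rsMinor_decomp' {r : ℕ} {W : Matrix (Fin r) (Fin r) R} (hW : UpperTri W)
    (a b : ℕ) (hab : a < b) (hbr : b ≤ r + 1)
    (A : Matrix (Fin a) (Fin a) R)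
    (hA : ∀ (p q : Fin a) (h1 : p.1 < r) (h2 : b - 1 - a + q.1 < r),
      A p q = W ⟨p.1, h1⟩ ⟨b - 1 - a + q.1, h2⟩) :
    rsMinor W (rowsSet r a b) = A.det * diagProd W (b - 1) := by
  rw [rsMinor_decomp hW a b hab hbr]
  congr 2
  apply Matrix.ext
  intro p q
  exact (hA p q _ _).symm

lemma emult_neg_one_pow_mul (t : R) (e : ℕ) (x : R) :
    emultiplicity t ((-1) ^ e * x) = emultiplicity t x := by
  rcases Nat.even_or_odd e with he | he
  · rw [he.neg_one_pow, one_mul]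
  · rw [he.neg_one_pow, neg_one_mul, emultiplicity_neg]

lemma emult_sign_prod [IsDomain R] {t : R} (ht' : Prime t) (α β : ℕ) (x y : R) :
    emultiplicity t ((-1) ^ α * x * ((-1) ^ β * y))
      = emultiplicity t x + emultiplicity t y := by
  rw [mul_assoc, emult_neg_one_pow_mul, emultiplicity_mul ht', emult_neg_one_pow_mul]

lemma emult_mul_sign_sign [IsDomain R] {t : R} (ht' : Prime t) (α β : ℕ) (x y : R) :
    emultiplicity t (x * ((-1) ^ α * ((-1) ^ β * y)))
      = emultiplicity t x + emultiplicity t y := by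
  rw [emultiplicity_mul ht', emult_neg_one_pow_mul, emult_neg_one_pow_mul]

end Aux

section DetAux

open Matrix

variable {R : Type*} [CommRing R]

lemma det_eq_one_outside_two_cols {n : ℕ} (B : Matrix (Fin n) (Fin n) R) (j1 j2 : Fin n)
    (hj : j1 ≠ j2) (hB : ∀ i q, q ≠ j1 → q ≠ j2 → B i q = if i = q then 1 else 0) :
    B.det = B j1 j1 * B j2 j2 - B j2 j1 * B j1 j2 := by
  classical
  have key : ∀ σ : Equiv.Perm (Fin n), (∀ q, q ≠ j1 → q ≠ j2 → σ q = q) →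
      σ = 1 ∨ σ = Equiv.swap j1 j2 := by
    intro σ hfix
    have hstab : ∀ x : Fin n, x = j1 ∨ x = j2 → σ x = j1 ∨ σ x = j2 := by
      intro x hx0
      by_contra hcon
      push_neg at hcon
      have h1 := hfix (σ x) hcon.1 hcon.2
      have hxx : σ x = x := σ.injective h1
      rcases hx0 with rfl | rfl
      · exact hcon.1 hxx
      · exact hcon.2 hxx
    rcases hstab j1 (Or.inl rfl) with h1' | h1'
    · left
      apply Equiv.ext
      intro q
      by_cases hq1 : q = j1
      · subst hq1; simpa using h1'
      by_cases hq2 : q = j2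
      · subst hq2
        rcases hstab _ (Or.inr rfl) with h2' | h2'
        · exact absurd (σ.injective (h2'.trans h1'.symm)) (by exact fun hh => hj hh.symm)
        · simpa using h2'
      · simpa using hfix q hq1 hq2
    · right
      apply Equiv.ext
      intro q
      by_cases hq1 : q = j1
      · subst hq1; rw [Equiv.swap_apply_left]; exact h1'
      by_cases hq2 : q = j2
      · subst hq2; rw [Equiv.swap_apply_right]
        rcases hstab _ (Or.inr rfl) with h2' | h2'
        · exact h2'
        · exact absurd (σ.injective (h1'.trans h2'.symm)) hj
      · rw [Equiv.swap_apply_of_ne_of_ne hq1 hq2]; exact hfix q hq1 hq2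
  have hswap1 : (1 : Equiv.Perm (Fin n)) ≠ Equiv.swap j1 j2 := by
    intro h
    have := congrArg (fun e : Equiv.Perm (Fin n) => e j1) h
    simp only [Equiv.Perm.one_apply, Equiv.swap_apply_left] at this
    exact hj this
  rw [Matrix.det_apply']
  rw [← Finset.sum_subset
    (Finset.subset_univ ({1, Equiv.swap j1 j2} : Finset (Equiv.Perm (Fin n)))) ?hout]
  case hout =>
    intro σ _ hσ
    simp only [Finset.mem_insert, Finset.mem_singleton, not_or] at hσ
    by_cases hfix : ∀ q, q ≠ j1 → q ≠ j2 → σ q = q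
    · rcases key σ hfix with rfl | rfl
      · exact absurd rfl hσ.1
      · exact absurd rfl hσ.2
    · push_neg at hfix
      obtain ⟨q, hq1, hq2, hq⟩ := hfix
      have hzero : B (σ q) q = 0 := by rw [hB _ _ hq1 hq2, if_neg hq]
      rw [Finset.prod_eq_zero (f := fun i => B (σ i) i) (Finset.mem_univ q) hzero, mul_zero]
  rw [Finset.sum_insert (by simpa using hswap1), Finset.sum_singleton]
  have hprod1 : ∏ q, B ((1 : Equiv.Perm (Fin n)) q) q = B j1 j1 * B j2 j2 := by
    rw [← Finset.prod_subset (Finset.subset_univ ({j1, j2} : Finset (Fin n))) ?hout1]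
    · rw [Finset.prod_insert (by simpa using hj), Finset.prod_singleton]
      rfl
    case hout1 =>
      intro x _ hx
      simp only [Finset.mem_insert, Finset.mem_singleton, not_or] at hx
      show B x x = 1
      rw [hB _ _ hx.1 hx.2, if_pos rfl]
  have hprod2 : ∏ q, B (Equiv.swap j1 j2 q) q = B j2 j1 * B j1 j2 := by
    rw [← Finset.prod_subset (Finset.subset_univ ({j1, j2} : Finset (Fin n))) ?hout2]
    · rw [Finset.prod_insert (by simpa using hj), Finset.prod_singleton,
        Equiv.swap_apply_left, Equiv.swap_apply_right]
    case hout2 =>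
      intro x _ hx
      simp only [Finset.mem_insert, Finset.mem_singleton, not_or] at hx
      rw [Equiv.swap_apply_of_ne_of_ne hx.1 hx.2, hB _ _ hx.1 hx.2, if_pos rfl]
  rw [hprod1, hprod2]
  simp [Equiv.Perm.sign_swap hj, sub_eq_add_neg]

lemma mul_updateColumn {n : ℕ} (M B : Matrix (Fin n) (Fin n) R) (j : Fin n) (v : Fin n → R) :
    M * (B.updateCol j v) = (M * B).updateCol j (M.mulVec v) := by
  ext i q
  by_cases hq : q = j
  · subst hq
    rw [Matrix.updateCol_self, Matrix.mul_apply]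
    simp only [Matrix.updateCol_self, Matrix.mulVec, dotProduct]
  · rw [Matrix.updateCol_ne hq, Matrix.mul_apply, Matrix.mul_apply]
    exact Finset.sum_congr rfl (fun x _ => by rw [Matrix.updateCol_ne hq])

lemma updateColumn_comm {n : ℕ} (M : Matrix (Fin n) (Fin n) R) {j1 j2 : Fin n} (hj : j1 ≠ j2)
    (v w : Fin n → R) :
    (M.updateCol j1 v).updateCol j2 w = (M.updateCol j2 w).updateCol j1 v := by
  ext i q
  by_cases h2 : q = j2
  · subst h2
    rw [Matrix.updateCol_self, Matrix.updateCol_ne hj.symm, Matrix.updateCol_self]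
  · rw [Matrix.updateCol_ne h2]
    by_cases h1 : q = j1
    · subst h1
      rw [Matrix.updateCol_self, Matrix.updateCol_self]
    · rw [Matrix.updateCol_ne h1, Matrix.updateCol_ne h1, Matrix.updateCol_ne h2]

lemma jacobi_two {n : ℕ} [IsDomain R] (M : Matrix (Fin n) (Fin n) R) (hdet : M.det ≠ 0)
    (i1 i2 j1 j2 : Fin n) (hj : j1 ≠ j2) :
    M.det * ((M.updateCol j1 (Pi.single i1 1)).updateCol j2 (Pi.single i2 1)).det
      = M.adjugate j1 i1 * M.adjugate j2 i2 - M.adjugate j2 i1 * M.adjugate j1 i2 := by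
  classical
  set B : Matrix (Fin n) (Fin n) R :=
    ((1 : Matrix (Fin n) (Fin n) R).updateCol j1 (fun i => M.adjugate i i1)).updateCol
      j2 (fun i => M.adjugate i i2) with hBdef
  have hMadj : ∀ i0 : Fin n,
      M.mulVec (fun i => M.adjugate i i0) = M.det • (Pi.single i0 1 : Fin n → R) := by
    intro i0
    funext i
    have h0 : (M * M.adjugate) i i0 = M.det * (1 : Matrix (Fin n) (Fin n) R) i i0 := by
      rw [Matrix.mul_adjugate]
      rw [Matrix.smul_apply, smul_eq_mul]
    rw [Matrix.mul_apply] at h0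
    show ∑ x, M i x * M.adjugate x i0 = _
    rw [h0]
    simp [Matrix.one_apply, Pi.single_apply]
  have hMB : M * B
      = ((M.updateCol j1 (M.det • (Pi.single i1 1 : Fin n → R))).updateCol
          j2 (M.det • (Pi.single i2 1 : Fin n → R))) := by
    rw [hBdef, mul_updateColumn, mul_updateColumn, Matrix.mul_one, hMadj, hMadj]
  have hdetMB : (M * B).det = M.det * (M.det *
      ((M.updateCol j1 (Pi.single i1 1)).updateCol j2 (Pi.single i2 1)).det) := by
    rw [hMB, Matrix.det_updateCol_smul, updateColumn_comm M hj,
      Matrix.det_updateCol_smul, updateColumn_comm M hj.symm]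
  have hdetB : B.det
      = M.adjugate j1 i1 * M.adjugate j2 i2 - M.adjugate j2 i1 * M.adjugate j1 i2 := by
    have hout : ∀ i q, q ≠ j1 → q ≠ j2 → B i q = if i = q then 1 else 0 := by
      intro i q hq1 hq2
      rw [hBdef, Matrix.updateCol_ne hq2, Matrix.updateCol_ne hq1, Matrix.one_apply]
    rw [det_eq_one_outside_two_cols B j1 j2 hj hout]
    rw [hBdef]
    rw [Matrix.updateCol_ne hj, Matrix.updateCol_self,
      Matrix.updateCol_self, Matrix.updateCol_ne hj, Matrix.updateCol_self,
      Matrix.updateCol_self]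
  have hmul := Matrix.det_mul M B
  rw [hdetMB, hdetB] at hmul
  exact mul_left_cancel₀ hdet hmul

lemma det_updateColumn_single {n : ℕ} (A : Matrix (Fin (n+1)) (Fin (n+1)) R)
    (i j : Fin (n+1)) :
    (A.updateCol j (Pi.single i 1)).det
      = (-1) ^ (i.1 + j.1) * (A.submatrix i.succAbove j.succAbove).det := by
  rw [← Matrix.det_transpose, ← Matrix.updateRow_transpose,
    ← Matrix.adjugate_apply, Matrix.adjugate_fin_succ_eq_det_submatrix,
    show (Aᵀ.submatrix j.succAbove i.succAbove) = (A.submatrix i.succAbove j.succAbove)ᵀ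
      from rfl, Matrix.det_transpose, add_comm]

lemma submatrix_updateColumn {m n : ℕ} (A : Matrix (Fin n) (Fin n) R) (f : Fin m → Fin n)
    (g : Fin m → Fin n) (hg : Function.Injective g) (j : Fin n) (j' : Fin m) (hj : g j' = j)
    (v : Fin n → R) :
    (A.updateCol j v).submatrix f g
      = (A.submatrix f g).updateCol j' (fun p => v (f p)) := by
  subst hj
  ext p q
  by_cases hq : q = j'
  · subst hq
    rw [Matrix.submatrix_apply, Matrix.updateCol_self, Matrix.updateCol_self]
  · have hgq : g q ≠ g j' := fun h => hq (hg h)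
    rw [Matrix.submatrix_apply, Matrix.updateCol_ne hgq, Matrix.updateCol_ne hq,
      Matrix.submatrix_apply]

end DetAux

section OrdAux

open Matrix

variable {R : Type*} [CommRing R]

lemma ord_neg_one_pow_mul (t : R) (e : ℕ) (x : R) : ord t ((-1) ^ e * x) = ord t x := by
  rcases Nat.even_or_odd e with he | he
  · rw [he.neg_one_pow, one_mul]
  · rw [he.neg_one_pow, neg_one_mul, ord, ord, emultiplicity_neg]

lemma rsMinor_eq_det' {r : ℕ} (W : Matrix (Fin r) (Fin r) R) (a b k : ℕ)
    (hab : a < b) (hbr : b ≤ r + 1) (hk : k = a + (r - (b - 1))) (hkr : k ≤ r) :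
    rsMinor W (rowsSet r a b)
      = (W.submatrix (fun p : Fin k => (⟨if p.1 < a then p.1 else (b - 1) + (p.1 - a),
          by have := p.isLt; split <;> omega⟩ : Fin r)) (lastCols r k hkr)).det := by
  apply rsMinor_eq_det W _ (by rw [rowsSet_card hab hbr, hk]) hkr
  · intro p
    simp only [rowsSet, Finset.mem_filter, Finset.mem_univ, true_and]
    show (if p.1 < a then p.1 else (b - 1) + (p.1 - a)) + 1 ≤ a ∨
      b ≤ (if p.1 < a then p.1 else (b - 1) + (p.1 - a)) + 1
    split_ifs with h
    · left; omega
    · right; omega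
  · intro p q hpq
    have hpq' : p.1 < q.1 := hpq
    apply Fin.mk_lt_mk.2
    have := q.isLt
    split_ifs <;> omega

lemma rowMap_strictMono {r a b k : ℕ} (hab : a < b) (hbr : b ≤ r + 1)
    (hk : k = a + (r - (b - 1))) (hkr : k ≤ r) :
    StrictMono (fun p : Fin k => (⟨if p.1 < a then p.1 else (b - 1) + (p.1 - a),
      by have := p.isLt; split <;> omega⟩ : Fin r)) := by
  intro p q hpq
  have hpq' : p.1 < q.1 := hpq
  apply Fin.mk_lt_mk.2
  have := q.isLt
  split_ifs <;> omega

lemma prod_shift {r c : ℕ} (W : Matrix (Fin r) (Fin r) R) (g : Fin (r - c) → Fin r)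
    (hg : ∀ p, (g p).1 = c + p.1) :
    (∏ p, W (g p) (g p))
      = ∏ p ∈ Finset.filter (fun x : Fin r => c ≤ x.1) Finset.univ, W p p := by
  apply Finset.prod_nbij g
  · intro p _
    simp only [Finset.mem_filter, Finset.mem_univ, true_and, hg]
    omega
  · intro p _ q _ hpq
    apply Fin.ext
    have := congrArg Fin.val hpq
    rw [hg, hg] at this
    omega
  · intro x hx
    simp only [Finset.coe_filter, Set.mem_setOf_eq, Finset.mem_univ, true_and] at hx
    exact ⟨⟨x.1 - c, by have := x.isLt; omega⟩, by simp,
      Fin.ext (by rw [hg]; show c + (x.1 - c) = x.1; have := x.isLt; omega)⟩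
  · intro p _
    rfl

end OrdAux

set_option maxHeartbeats 1600000 in
theorem stmt13 {R : Type*} [CommRing R] [IsDomain R] [IsDiscreteValuationRing R]
    [CharZero (IsLocalRing.ResidueField R)]
    (t : R) (ht : Irreducible t) (r : ℕ) (μ : ℕ → ℕ)
    (hμ : ∀ i, 1 ≤ i → i < r → μ (i + 1) ≤ μ i)
    (Nstar : Matrix (Fin r) (Fin r) R) (hgen : MuGeneric t r μ Nstar)
    (k : ℕ → ℕ → ℤ) (hk : DetFormula t Nstar k)
    (i j : ℕ) (hi1 : 1 ≤ i) (hij : i ≤ j) (hjr : j ≤ r) :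
    (dMinor t Nstar (j - i) j + dMinor t Nstar (j - i) (j + 1) ≤
      dMinor t Nstar (j - i - 1) j + dMinor t Nstar (j - i + 1) (j + 1)) ∧
    0 ≤ k i j := by
  classical
  obtain ⟨N, hN0, QU, QL, TL, TU, QhL, QhU, hEqN, hQUtri, hQUadm, hQLtri, hQLadm,
    hTUtri, hTUunit, hTLfac, hTLunit, hQNTtri, hQQfac, hQhLtri, hQhLadm, hQhUtri, hQhUadm,
    hE⟩ := hgen
  have ht' : Prime t := UniqueFactorizationMonoid.irreducible_iff_prime.mp ht
  have hNtri : UpperTri Nstar := by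
    have h17 : Nstar = QU * (QL * N * TL) * TU := by
      rw [hEqN]; simp only [Matrix.mul_assoc]
    rw [h17]
    exact upperTri_mul (upperTri_mul hQUtri hQNTtri) hTUtri
  have hdetN : Nstar.det ≠ 0 := by
    rw [hEqN]
    simp only [Matrix.det_mul]
    exact mul_ne_zero (mul_ne_zero (mul_ne_zero hQUadm.1.ne_zero hQLadm.1.ne_zero) hN0)
      (mul_ne_zero hTLunit.ne_zero hTUunit.ne_zero)
  have hNdiag : ∀ p : Fin r, Nstar p p ≠ 0 := by
    intro p hp0
    apply hdetN
    rw [hNtri.det_eq]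
    exact Finset.prod_eq_zero (Finset.mem_univ p) hp0
  have hWtri : UpperTri (QL * N * (TL * TU)) := by
    have h17 : QL * N * (TL * TU) = (QL * N * TL) * TU := by simp only [Matrix.mul_assoc]
    rw [h17]; exact upperTri_mul hQNTtri hTUtri
  have hdetW : (QL * N * (TL * TU)).det ≠ 0 := by
    simp only [Matrix.det_mul]
    exact mul_ne_zero (mul_ne_zero hQLadm.1.ne_zero hN0)
      (mul_ne_zero hTLunit.ne_zero hTUunit.ne_zero)
  have hWdiag : ∀ p : Fin r, (QL * N * (TL * TU)) p p ≠ 0 := by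
    intro p hp0
    apply hdetW
    rw [hWtri.det_eq]
    exact Finset.prod_eq_zero (Finset.mem_univ p) hp0
  have hJmono : ∀ (kk : ℕ) (hkk : kk ≤ r), StrictMono (lastCols r kk hkk) := by
    intro kk hkk p q hpq
    have : p.1 < q.1 := hpq
    exact Fin.mk_lt_mk.2 (by omega)
  -- E1 row monotonicity
  have hmono : ∀ (kk : ℕ) (hkk : kk ≤ r) (I I' : Fin kk → Fin r), StrictMono I → StrictMono I' →
      (∀ p, (I p).1 ≤ (I' p).1) →
      ord t (Nstar.submatrix I (lastCols r kk hkk)).det ≤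
        ord t (Nstar.submatrix I' (lastCols r kk hkk)).det := by
    intro kk hkk I I' hI hI' hle
    have e1 := (hE kk hkk I (lastCols r kk hkk) hI (hJmono kk hkk)).1
    have e2 := (hE kk hkk I' (lastCols r kk hkk) hI' (hJmono kk hkk)).1
    rw [← hEqN] at e1 e2
    rw [e1, e2]
    apply sInf_le_sInf
    rintro x ⟨S, hS, hSle, rfl⟩
    exact ⟨S, hS, fun s => le_trans (Fin.le_def.2 (hle s)) (hSle s), rfl⟩
  -- E1 finiteness
  have hfin : ∀ (kk : ℕ) (hkk : kk ≤ r) (I : Fin kk → Fin r), StrictMono I →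
      ord t (Nstar.submatrix I (lastCols r kk hkk)).det ≠ ⊤ := by
    intro kk hkk I hI
    have e1 := (hE kk hkk I (lastCols r kk hkk) hI (hJmono kk hkk)).1
    rw [← hEqN] at e1
    have hIle : ∀ p, I p ≤ lastCols r kk hkk p := by
      have hkey : ∀ (d : ℕ) (q q' : Fin kk), q.1 + d = q'.1 → (I q).1 + d ≤ (I q').1 := by
        intro d
        induction d with
        | zero =>
          intro q q' h
          have hqq : q = q' := Fin.ext (by omega)
          subst hqq; omega
        | succ b ih =>
          intro q q' h
          have hq'' : q.1 + b < kk := by have := q'.isLt; omega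
          have h1 := ih q ⟨q.1 + b, hq''⟩ rfl
          have h2 : (I ⟨q.1 + b, hq''⟩).1 < (I q').1 :=
            hI (Fin.lt_def.2 (show q.1 + b < q'.1 by omega))
          omega
      intro p
      have hplt := p.isLt
      have hpk : (kk - 1 : ℕ) < kk := by omega
      have h1 := hkey (kk - 1 - p.1) p ⟨kk - 1, hpk⟩ (show p.1 + (kk - 1 - p.1) = kk - 1 by omega)
      have h2 := (I ⟨kk - 1, hpk⟩).isLt
      exact Fin.le_def.2 (show (I p).1 ≤ r - kk + p.1 by omega)
    have hdet0 : ((QL * N * (TL * TU)).submatrix (lastCols r kk hkk)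
        (lastCols r kk hkk)).det ≠ 0 := by
      have htr : UpperTri ((QL * N * (TL * TU)).submatrix (lastCols r kk hkk)
          (lastCols r kk hkk)) := by
        intro p q hpq
        apply hWtri
        exact Fin.lt_def.2 (show r - kk + q.1 < r - kk + p.1 by
          have : q.1 < p.1 := hpq; omega)
      rw [htr.det_eq]
      exact Finset.prod_ne_zero_iff.2 (fun p _ => hWdiag _)
    have hne : ord t ((QL * N * (TL * TU)).submatrix (lastCols r kk hkk)
        (lastCols r kk hkk)).det ≠ ⊤ :=
      finiteMultiplicity_iff_emultiplicity_ne_top.1 (FiniteMultiplicity.of_not_isUnit ht.not_isUnit hdet0)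
    rw [e1]
    intro htop
    apply hne
    have hle2 : sInf {m : ℕ∞ | ∃ S, StrictMono S ∧ (∀ s, I s ≤ S s) ∧
        m = ord t ((QL * N * (TL * TU)).submatrix S (lastCols r kk hkk)).det}
        ≤ ord t ((QL * N * (TL * TU)).submatrix (lastCols r kk hkk) (lastCols r kk hkk)).det :=
      sInf_le ⟨lastCols r kk hkk, hJmono kk hkk, hIle, rfl⟩
    rw [htop, top_le_iff] at hle2
    exact hle2
  -- nonvanishing of all right-justified minors
  have hrs_ne : ∀ a b, a < b → b ≤ r + 1 → rsMinor Nstar (rowsSet r a b) ≠ 0 := by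
    intro a b hab hbr h0
    have hkr : a + (r - (b - 1)) ≤ r := by omega
    have hh := hfin _ hkr _ (rowMap_strictMono hab hbr rfl hkr)
    rw [← rsMinor_eq_det' Nstar a b _ hab hbr rfl hkr, h0] at hh
    exact hh (emultiplicity_zero t)
  have hfin' : ∀ a b, a < b → b ≤ r + 1 →
      FiniteMultiplicity t (rsMinor Nstar (rowsSet r a b)) :=
    fun a b hab hbr => FiniteMultiplicity.of_not_isUnit ht.not_isUnit (hrs_ne a b hab hbr)
  -- row-set monotonicity at the level of dMinor, for equal-size row sets
  have hrowle : ∀ (a b a' b' kk : ℕ), a < b → b ≤ r + 1 → a' < b' → b' ≤ r + 1 →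
      kk = a + (r - (b - 1)) → kk = a' + (r - (b' - 1)) →
      (∀ x : ℕ, x < kk →
        (if x < a then x else (b - 1) + (x - a)) ≤ (if x < a' then x else (b' - 1) + (x - a'))) →
      dMinor t Nstar a b ≤ dMinor t Nstar a' b' := by
    intro a b a' b' kk hab hbr hab' hbr' hkk hkk' hle
    have hkr : kk ≤ r := by omega
    simp only [dMinor]
    rw [rsMinor_eq_det' Nstar a b kk hab hbr hkk hkr,
      rsMinor_eq_det' Nstar a' b' kk hab' hbr' hkk' hkr]
    apply hmono kk hkr _ _ (rowMap_strictMono hab hbr hkk hkr)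
      (rowMap_strictMono hab' hbr' hkk' hkr)
    intro p
    exact hle p.1 p.isLt
  have haux1 : ∀ jj, 2 ≤ jj → jj ≤ r →
      dMinor t Nstar (jj - 1) (jj + 1) ≤ dMinor t Nstar (jj - 2) jj := by
    intro jj h2 hjr'
    apply hrowle (jj - 1) (jj + 1) (jj - 2) jj (r - 1) (by omega) (by omega) (by omega)
      (by omega) (by omega) (by omega)
    intro x hx
    split_ifs <;> omega
  have haux0 : 1 ≤ r → dMinor t Nstar 0 2 ≤ dMinor t Nstar 0 1 := by
    intro hr1
    simp only [dMinor]
    rw [rsMinor_decomp hNtri 0 2 (by omega) (by omega),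
      rsMinor_decomp hNtri 0 1 (by omega) (by omega), Matrix.det_fin_zero,
      Matrix.det_fin_zero, one_mul, one_mul]
    apply emultiplicity_le_emultiplicity_of_dvd_right
    simp only [diagProd]
    rw [prod_shift Nstar _ (fun p => rfl), prod_shift Nstar _ (fun p => rfl)]
    apply Finset.prod_dvd_prod_of_subset
    intro x hx
    simp only [Finset.mem_filter, Finset.mem_univ, true_and] at hx ⊢
    omega
  -- the key inequality
  have key : ∀ ii jj, 1 ≤ ii → ii ≤ jj → jj ≤ r →
      dMinor t Nstar (jj - ii) jj + dMinor t Nstar (jj - ii) (jj + 1)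
        ≤ dMinor t Nstar (jj - ii - 1) jj + dMinor t Nstar (jj - ii + 1) (jj + 1) := by
    intro ii jj hii hiijj hjjr
    rcases Nat.lt_or_ge ii jj with hlt | hge
    swap
    · -- ii = jj
      have hee : ii = jj := by omega
      subst hee
      rw [Nat.sub_self]
      rw [show (0 : ℕ) - 1 = 0 from rfl, show (0 : ℕ) + 1 = 1 from rfl]
      apply add_le_add_right
      simp only [dMinor]
      rw [rsMinor_decomp hNtri 0 (ii + 1) (by omega) (by omega),
        rsMinor_decomp hNtri 1 (ii + 1) (by omega) (by omega), Matrix.det_fin_zero, one_mul]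
      exact emultiplicity_le_emultiplicity_of_dvd_right (dvd_mul_left _ _)
    rcases Nat.lt_or_ge 1 ii with h2i | h1i
    swap
    · -- ii = 1
      have hee : ii = 1 := by omega
      subst hee
      have huniv : rowsSet r (jj - 1) jj = rowsSet r jj (jj + 1) := by
        ext x
        simp only [rowsSet, Finset.mem_filter, Finset.mem_univ, true_and]
        omega
      have heq : dMinor t Nstar (jj - 1) jj = dMinor t Nstar jj (jj + 1) := by
        simp only [dMinor]; rw [huniv]
      rw [heq, show jj - 1 + 1 = jj from by omega,
        add_comm (dMinor t Nstar (jj - 1 - 1) jj) (dMinor t Nstar jj (jj + 1))]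
      apply add_le_add_right
      rw [show (jj - 1 - 1 : ℕ) = jj - 2 from by omega]
      exact haux1 jj (by omega) hjjr
    · -- main case 2 ≤ ii < jj
      obtain ⟨m, hm⟩ : ∃ m, jj - ii = m + 1 := ⟨jj - ii - 1, by omega⟩
      rw [hm, Nat.add_sub_cancel, show (m + 1 + 1 : ℕ) = m + 2 by omega]
      have hrowV : ∀ p : Fin (m + 2), p.1 < r := by intro p; have := p.isLt; omega
      have hcolV : ∀ q : Fin (m + 2), ii - 1 + q.1 < r := by intro q; have := q.isLt; omega
      set V : Matrix (Fin (m + 2)) (Fin (m + 2)) R :=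
        Matrix.of (fun p q : Fin (m + 2) => Nstar ⟨p.1, hrowV p⟩ ⟨ii - 1 + q.1, hcolV q⟩)
        with hV
      have hVapp : ∀ p q : Fin (m + 2), V p q = Nstar ⟨p.1, hrowV p⟩ ⟨ii - 1 + q.1, hcolV q⟩ :=
        fun p q => rfl
      -- identifications of the four corner minors
      have hd1 : rsMinor Nstar (rowsSet r (m + 1) jj)
          = (V.submatrix Fin.castSucc Fin.castSucc).det * diagProd Nstar (jj - 1) := by
        apply rsMinor_decomp' hNtri (m + 1) jj (by omega) (by omega)
        intro p q h1 h2
        rw [Matrix.submatrix_apply, hVapp]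
        congr 1
        exact Fin.ext (show ii - 1 + (Fin.castSucc q).1 = jj - 1 - (m + 1) + q.1 by
          rw [Fin.coe_castSucc]; omega)
      have hd2 : rsMinor Nstar (rowsSet r (m + 1) (jj + 1))
          = (V.submatrix Fin.castSucc Fin.succ).det * diagProd Nstar (jj + 1 - 1) := by
        apply rsMinor_decomp' hNtri (m + 1) (jj + 1) (by omega) (by omega)
        intro p q h1 h2
        rw [Matrix.submatrix_apply, hVapp]
        congr 1
        exact Fin.ext (show ii - 1 + (Fin.succ q).1 = jj + 1 - 1 - (m + 1) + q.1 by
          rw [Fin.val_succ]; omega)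
      have hd3 : rsMinor Nstar (rowsSet r m jj)
          = (V.submatrix (Fin.castSucc ∘ Fin.castSucc) (Fin.castSucc ∘ Fin.succ)).det
            * diagProd Nstar (jj - 1) := by
        apply rsMinor_decomp' hNtri m jj (by omega) (by omega)
        intro p q h1 h2
        rw [Matrix.submatrix_apply, Function.comp_apply, Function.comp_apply, hVapp]
        congr 1
        exact Fin.ext (show ii - 1 + (Fin.castSucc (Fin.succ q)).1 = jj - 1 - m + q.1 by
          rw [Fin.coe_castSucc, Fin.val_succ]; omega)
      have hd4 : rsMinor Nstar (rowsSet r (m + 2) (jj + 1))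
          = V.det * diagProd Nstar (jj + 1 - 1) := by
        apply rsMinor_decomp' hNtri (m + 2) (jj + 1) (by omega) (by omega)
        intro p q h1 h2
        rw [hVapp]
        congr 1
        exact Fin.ext (show ii - 1 + q.1 = jj + 1 - 1 - (m + 2) + q.1 by omega)
      have hdetV : V.det ≠ 0 := by
        intro h0
        apply hrs_ne (m + 2) (jj + 1) (by omega) (by omega)
        rw [hd4, h0, zero_mul]
      -- the shifted row map value
      have hsa : ∀ p : Fin (m + 1), (((Fin.last m).castSucc).succAbove p).1
          = if p.1 < m then p.1 else p.1 + 1 := by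
        intro p
        simp only [Fin.succAbove, apply_ite Fin.val, Fin.coe_castSucc, Fin.val_succ,
          Fin.castSucc_lt_castSucc_iff, Fin.lt_def, Fin.val_last]
      -- top row maps
      have hφSpf : ∀ p : Fin (m + 1), p.1 < r := fun p => by have := p.isLt; omega
      have hφTpf : ∀ p : Fin (m + 1), (if p.1 < m then p.1 else p.1 + 1) < r := fun p => by
        have := p.isLt; split <;> omega
      set φS : Fin (m + 1) → Fin r := fun p => ⟨p.1, hφSpf p⟩ with hφS
      set φT : Fin (m + 1) → Fin r := fun p => ⟨if p.1 < m then p.1 else p.1 + 1, hφTpf p⟩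
        with hφT
      have hφSv : ∀ p, (φS p).1 = p.1 := fun p => rfl
      have hφTv : ∀ p, (φT p).1 = if p.1 < m then p.1 else p.1 + 1 := fun p => rfl
      have hφSmono : StrictMono φS := fun p q h => Fin.mk_lt_mk.2 h
      have hφTmono : StrictMono φT := fun p q h => Fin.mk_lt_mk.2 (by
        have h' : p.1 < q.1 := h
        split_ifs <;> omega)
      have hcomp : ∀ (c0 : ℕ) (hc0 : c0 ≤ r) (hc2 : m + 2 ≤ c0),
          ord t ((Nstar.submatrix (comb c0 (m + 1) hc0 φS)
            (lastCols r ((m + 1) + (r - c0)) (by omega))).det)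
          ≤ ord t ((Nstar.submatrix (comb c0 (m + 1) hc0 φT)
            (lastCols r ((m + 1) + (r - c0)) (by omega))).det) := by
        intro c0 hc0 hc2
        apply hmono _ (by omega) _ _
          (comb_strictMono hc0 hφSmono (fun p => by rw [hφSv]; have := p.isLt; omega))
          (comb_strictMono hc0 hφTmono (fun p => by
            rw [hφTv]; have := p.isLt; split <;> omega))
        intro p
        rcases lt_or_ge p.1 (m + 1) with hp | hp
        · rw [comb_val_lt hc0 φS hp, comb_val_lt hc0 φT hp]
          show p.1 ≤ if p.1 < m then p.1 else p.1 + 1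
          split <;> omega
        · rw [comb_val_ge hc0 φS (by omega), comb_val_ge hc0 φT (by omega)]
      have hXle := hcomp (jj - 1) (by omega) (by omega)
      have hYle := hcomp jj (by omega) (by omega)
      -- identify the comb minors with V-submatrix minors
      have hA1 : ∀ (p q : Fin (m + 1)) (h2 : jj - 1 - (m + 1) + q.1 < r),
          (V.submatrix Fin.castSucc Fin.castSucc) p q
            = Nstar (φS p) ⟨jj - 1 - (m + 1) + q.1, h2⟩ := by
        intro p q h2
        rw [Matrix.submatrix_apply, hVapp]
        congr 1
        exact Fin.ext (show ii - 1 + (Fin.castSucc q).1 = jj - 1 - (m + 1) + q.1 by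
          rw [Fin.coe_castSucc]; omega)
      have hAX : ∀ (p q : Fin (m + 1)) (h2 : jj - 1 - (m + 1) + q.1 < r),
          (V.submatrix (((Fin.last m).castSucc).succAbove) Fin.castSucc) p q
            = Nstar (φT p) ⟨jj - 1 - (m + 1) + q.1, h2⟩ := by
        intro p q h2
        rw [Matrix.submatrix_apply, hVapp]
        have hrow : (⟨((((Fin.last m).castSucc).succAbove) p).1,
            hrowV ((((Fin.last m).castSucc).succAbove) p)⟩ : Fin r) = φT p :=
          Fin.ext (show (((Fin.last m).castSucc).succAbove p).1 = (φT p).1 by rw [hsa, hφTv])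
        rw [hrow]
        congr 1
        exact Fin.ext (show ii - 1 + (Fin.castSucc q).1 = jj - 1 - (m + 1) + q.1 by
          rw [Fin.coe_castSucc]; omega)

      have hA2 : ∀ (p q : Fin (m + 1)) (h2 : jj - (m + 1) + q.1 < r),
          (V.submatrix Fin.castSucc Fin.succ) p q
            = Nstar (φS p) ⟨jj - (m + 1) + q.1, h2⟩ := by
        intro p q h2
        rw [Matrix.submatrix_apply, hVapp]
        congr 1
        exact Fin.ext (show ii - 1 + (Fin.succ q).1 = jj - (m + 1) + q.1 by
          rw [Fin.val_succ]; omega)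
      have hAY : ∀ (p q : Fin (m + 1)) (h2 : jj - (m + 1) + q.1 < r),
          (V.submatrix (((Fin.last m).castSucc).succAbove) Fin.succ) p q
            = Nstar (φT p) ⟨jj - (m + 1) + q.1, h2⟩ := by
        intro p q h2
        rw [Matrix.submatrix_apply, hVapp]
        have hrow : (⟨((((Fin.last m).castSucc).succAbove) p).1,
            hrowV ((((Fin.last m).castSucc).succAbove) p)⟩ : Fin r) = φT p :=
          Fin.ext (show (((Fin.last m).castSucc).succAbove p).1 = (φT p).1 by rw [hsa, hφTv])
        rw [hrow]
        congr 1
        exact Fin.ext (show ii - 1 + (Fin.succ q).1 = jj - (m + 1) + q.1 by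
          rw [Fin.val_succ]; omega)
      rw [comb_det' hNtri (jj - 1) (m + 1) (by omega) (by omega) φS
            (fun p => by rw [hφSv]; have := p.isLt; omega)
            (V.submatrix Fin.castSucc Fin.castSucc) hA1,
          comb_det' hNtri (jj - 1) (m + 1) (by omega) (by omega) φT
            (fun p => by rw [hφTv]; have := p.isLt; split <;> omega)
            (V.submatrix (((Fin.last m).castSucc).succAbove) Fin.castSucc) hAX] at hXle
      rw [comb_det' hNtri jj (m + 1) (by omega) (by omega) φS
            (fun p => by rw [hφSv]; have := p.isLt; omega)
            (V.submatrix Fin.castSucc Fin.succ) hA2,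
          comb_det' hNtri jj (m + 1) (by omega) (by omega) φT
            (fun p => by rw [hφTv]; have := p.isLt; split <;> omega)
            (V.submatrix (((Fin.last m).castSucc).succAbove) Fin.succ) hAY] at hYle
      have hPi1 : emultiplicity t (diagProd Nstar (jj - 1)) ≠ ⊤ :=
        finiteMultiplicity_iff_emultiplicity_ne_top.1 (FiniteMultiplicity.of_not_isUnit ht.not_isUnit (by
          simp only [diagProd]
          exact Finset.prod_ne_zero_iff.2 (fun p _ => hNdiag _)))
      have hPi2 : emultiplicity t (diagProd Nstar jj) ≠ ⊤ :=
        finiteMultiplicity_iff_emultiplicity_ne_top.1 (FiniteMultiplicity.of_not_isUnit ht.not_isUnit (by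
          simp only [diagProd]
          exact Finset.prod_ne_zero_iff.2 (fun p _ => hNdiag _)))
      simp only [ord] at hXle hYle
      rw [emultiplicity_mul ht', emultiplicity_mul ht'] at hXle
      rw [emultiplicity_mul ht', emultiplicity_mul ht'] at hYle
      replace hXle := (WithTop.add_le_add_iff_right hPi1).1 hXle
      replace hYle := (WithTop.add_le_add_iff_right hPi2).1 hYle
      -- Jacobi identity
      have hne0 : (0 : Fin (m + 2)) ≠ Fin.last (m + 1) := by
        intro h
        have h' : (0 : ℕ) = m + 1 := congrArg Fin.val h
        omega
      have hjac := jacobi_two V hdetV ((Fin.last m).castSucc) (Fin.last (m + 1)) 0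
        (Fin.last (m + 1)) hne0
      -- rewrite the complementary-minor factor
      have hD2 : (V.updateCol 0
            ((Pi.single ((Fin.last m).castSucc) (1 : R) : Fin (m + 2) → R))).submatrix
            Fin.castSucc Fin.castSucc
          = (V.submatrix Fin.castSucc Fin.castSucc).updateCol 0
            (fun p => (Pi.single ((Fin.last m).castSucc) (1 : R) : Fin (m + 2) → R)
              p.castSucc) :=
        submatrix_updateColumn V Fin.castSucc Fin.castSucc (Fin.castSucc_injective _) 0 0
          Fin.castSucc_zero _
      have hsingle : (fun p : Fin (m + 1) =>
            (Pi.single ((Fin.last m).castSucc) (1 : R) : Fin (m + 2) → R) p.castSucc)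
          = (Pi.single (Fin.last m) 1 : Fin (m + 1) → R) := by
        funext p
        simp only [Pi.single_apply, Fin.castSucc_inj]
      rw [det_updateColumn_single, Fin.succAbove_last, hD2, hsingle,
        det_updateColumn_single, Fin.succAbove_last, Fin.succAbove_zero,
        Matrix.submatrix_submatrix, sub_eq_add_neg] at hjac
      have hcore := congrArg (emultiplicity t) hjac
      rw [emult_mul_sign_sign ht'] at hcore
      have hmin : min (emultiplicity t (V.adjugate 0 ((Fin.last m).castSucc)
            * V.adjugate (Fin.last (m + 1)) (Fin.last (m + 1))))
          (emultiplicity t (V.adjugate (Fin.last (m + 1)) ((Fin.last m).castSucc)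
            * V.adjugate 0 (Fin.last (m + 1))))
          ≤ emultiplicity t (V.adjugate 0 ((Fin.last m).castSucc)
              * V.adjugate (Fin.last (m + 1)) (Fin.last (m + 1))
            + -(V.adjugate (Fin.last (m + 1)) ((Fin.last m).castSucc)
              * V.adjugate 0 (Fin.last (m + 1)))) := by
        have hmm := min_le_emultiplicity_add (p := t)
          (a := V.adjugate 0 ((Fin.last m).castSucc)
            * V.adjugate (Fin.last (m + 1)) (Fin.last (m + 1)))
          (b := -(V.adjugate (Fin.last (m + 1)) ((Fin.last m).castSucc)
            * V.adjugate 0 (Fin.last (m + 1))))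
        rwa [emultiplicity_neg] at hmm
      have hT1 : emultiplicity t (V.adjugate 0 ((Fin.last m).castSucc)
            * V.adjugate (Fin.last (m + 1)) (Fin.last (m + 1)))
          = emultiplicity t (V.submatrix (((Fin.last m).castSucc).succAbove) Fin.succ).det
            + emultiplicity t (V.submatrix Fin.castSucc Fin.castSucc).det := by
        rw [Matrix.adjugate_fin_succ_eq_det_submatrix, Matrix.adjugate_fin_succ_eq_det_submatrix,
          Fin.succAbove_last, Fin.succAbove_zero]
        exact emult_sign_prod ht' _ _ _ _
      have hT2 : emultiplicity t (V.adjugate (Fin.last (m + 1)) ((Fin.last m).castSucc)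
            * V.adjugate 0 (Fin.last (m + 1)))
          = emultiplicity t (V.submatrix (((Fin.last m).castSucc).succAbove) Fin.castSucc).det
            + emultiplicity t (V.submatrix Fin.castSucc Fin.succ).det := by
        rw [Matrix.adjugate_fin_succ_eq_det_submatrix, Matrix.adjugate_fin_succ_eq_det_submatrix,
          Fin.succAbove_last, Fin.succAbove_zero]
        exact emult_sign_prod ht' _ _ _ _
      have hfinal : emultiplicity t (V.submatrix Fin.castSucc Fin.castSucc).det
          + emultiplicity t (V.submatrix Fin.castSucc Fin.succ).det
          ≤ emultiplicity t V.det
          + emultiplicity t (V.submatrix (Fin.castSucc ∘ Fin.castSucc)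
              (Fin.castSucc ∘ Fin.succ)).det := by
        rw [hcore]
        refine le_trans ?_ hmin
        rw [hT1, hT2]
        apply le_min
        · exact le_trans (add_le_add_right hYle _) (le_of_eq (add_comm _ _))
        · exact add_le_add_left hXle _
      -- assemble
      simp only [dMinor]
      rw [hd1, hd2, hd3, hd4]
      simp only [ord]
      rw [emultiplicity_mul ht', emultiplicity_mul ht', emultiplicity_mul ht',
        emultiplicity_mul ht']
      rw [add_add_add_comm]
      conv_rhs => rw [add_add_add_comm]
      apply add_le_add_left
      exact hfinal.trans (le_of_eq (add_comm _ _))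
  refine ⟨key i j hi1 hij hjr, ?_⟩
  -- transfers to ℤ
  have hZ1 : ∀ a1 b1 a3 b3, a1 < b1 → b1 ≤ r + 1 → a3 < b3 → b3 ≤ r + 1 →
      dMinor t Nstar a1 b1 ≤ dMinor t Nstar a3 b3 →
      dMinorZ t Nstar a1 b1 ≤ dMinorZ t Nstar a3 b3 := by
    intro a1 b1 a3 b3 ha1 hb1 ha3 hb3 hle
    have f1 := hfin' a1 b1 ha1 hb1
    have f3 := hfin' a3 b3 ha3 hb3
    simp only [dMinor, ord] at hle
    rw [f1.emultiplicity_eq_multiplicity, f3.emultiplicity_eq_multiplicity] at hle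
    have hnat : multiplicity t (rsMinor Nstar (rowsSet r a1 b1))
        ≤ multiplicity t (rsMinor Nstar (rowsSet r a3 b3)) := by exact_mod_cast hle
    simp only [dMinorZ, ordZ]
    exact_mod_cast hnat
  have hZ2 : ∀ a1 b1 a2 b2 a3 b3 a4 b4,
      a1 < b1 → b1 ≤ r + 1 → a2 < b2 → b2 ≤ r + 1 → a3 < b3 → b3 ≤ r + 1 →
      a4 < b4 → b4 ≤ r + 1 →
      dMinor t Nstar a1 b1 + dMinor t Nstar a2 b2
        ≤ dMinor t Nstar a3 b3 + dMinor t Nstar a4 b4 →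
      dMinorZ t Nstar a1 b1 + dMinorZ t Nstar a2 b2
        ≤ dMinorZ t Nstar a3 b3 + dMinorZ t Nstar a4 b4 := by
    intro a1 b1 a2 b2 a3 b3 a4 b4 ha1 hb1 ha2 hb2 ha3 hb3 ha4 hb4 hle
    have f1 := hfin' a1 b1 ha1 hb1
    have f2 := hfin' a2 b2 ha2 hb2
    have f3 := hfin' a3 b3 ha3 hb3
    have f4 := hfin' a4 b4 ha4 hb4
    simp only [dMinor, ord] at hle
    rw [f1.emultiplicity_eq_multiplicity, f2.emultiplicity_eq_multiplicity,
      f3.emultiplicity_eq_multiplicity, f4.emultiplicity_eq_multiplicity] at hle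
    have hnat : multiplicity t (rsMinor Nstar (rowsSet r a1 b1))
          + multiplicity t (rsMinor Nstar (rowsSet r a2 b2))
        ≤ multiplicity t (rsMinor Nstar (rowsSet r a3 b3))
          + multiplicity t (rsMinor Nstar (rowsSet r a4 b4)) := by exact_mod_cast hle
    simp only [dMinorZ, ordZ]
    exact_mod_cast hnat
  rcases Nat.lt_or_ge 1 i with h2i | h1i
  · -- i ≥ 2
    obtain ⟨i', rfl⟩ : ∃ i', i = i' + 1 := ⟨i - 1, by omega⟩
    have hi'1 : 1 ≤ i' := by omega
    have hs1 := hk (i' + 1) j (by omega) hij hjr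
    have hs2 := hk i' j hi'1 (by omega) hjr
    have hins : Finset.Icc 1 (i' + 1) = insert (i' + 1) (Finset.Icc 1 i') := by
      ext x; simp only [Finset.mem_Icc, Finset.mem_insert]; omega
    rw [hins, Finset.sum_insert (by simp only [Finset.mem_Icc]; omega), hs2] at hs1
    have hkey := key (i' + 1) j (by omega) hij hjr
    have hZZ := hZ2 (j - (i' + 1)) j (j - (i' + 1)) (j + 1) (j - (i' + 1) - 1) j
      (j - (i' + 1) + 1) (j + 1) (by omega) (by omega) (by omega) (by omega) (by omega)
      (by omega) (by omega) (by omega) hkey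
    rw [show j - (i' + 1) + 1 = j - i' from by omega] at hZZ
    rw [show j - i' - 1 = j - (i' + 1) from by omega] at hs1
    linarith
  · -- i = 1
    have hee : i = 1 := by omega
    subst hee
    have hsum := hk 1 j le_rfl hij hjr
    rw [Finset.Icc_self, Finset.sum_singleton] at hsum
    rw [hsum, sub_nonneg]
    rcases Nat.lt_or_ge 1 j with hj2 | hj1
    · have hle := haux1 j (by omega) hjr
      have h2 := hZ1 (j - 1) (j + 1) (j - 2) j (by omega) (by omega) (by omega) (by omega) hle
      rw [show (j - 1 - 1 : ℕ) = j - 2 from by omega]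
      exact h2
    · have hee : j = 1 := by omega
      subst hee
      exact hZ1 0 2 0 1 (by omega) (by omega) (by omega) (by omega) (haux0 (by omega))
end

section
/- Let Q be an r×r μ-admissible matrix and let I = (i_1,…,i_k) and H = (h_1,…,h_k) be index sets of length k ≤ r. Define the index set Min(I,H) = (m_1,…,m_k) by m_s = min(i_s, h_s). Then |μ_{Min(I,H)}| − |μ_I| ≤ ‖Q_{IH}‖. -/
open Matrix

section AuxRearr

open Finset

/-- Two downward-closed finsets in a linear order are nested. -/
lemma chain_of_lower {k : ℕ} {A B : Finset (Fin k)}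
    (hA : ∀ ⦃s s' : Fin k⦄, s' ≤ s → s ∈ A → s' ∈ A)
    (hB : ∀ ⦃s s' : Fin k⦄, s' ≤ s → s ∈ B → s' ∈ B) : A ⊆ B ∨ B ⊆ A := by
  by_contra hc
  push_neg at hc
  obtain ⟨h1, h2⟩ := hc
  obtain ⟨x, hxA, hxB⟩ := Finset.not_subset.mp h1
  obtain ⟨y, hyB, hyA⟩ := Finset.not_subset.mp h2
  rcases le_total x y with h | h
  · exact hxB (hB h hyB)
  · exact hyA (hA h hxA)

/-- Rearrangement inequality for `max` of two antitone sequences: the sorted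
pairing minimizes the sum of maxima. -/
lemma maxsum_rearr {k : ℕ} (a b : Fin k → ℕ) (ha : Antitone a) (hb : Antitone b)
    (σ : Equiv.Perm (Fin k)) :
    ∑ s, max (a s) (b s) ≤ ∑ s, max (a s) (b (σ s)) := by
  classical
  set M := (Finset.univ.sup fun s : Fin k => max (a s) (b s)) + 1 with hM
  have hbnd : ∀ s : Fin k, max (a s) (b s) < M :=
    fun s => Nat.lt_succ_of_le (Finset.le_sup (f := fun s : Fin k => max (a s) (b s)) (Finset.mem_univ s))
  have key : ∀ g : Fin k → ℕ, (∀ s, max (a s) (g s) < M) →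
      ∑ s, max (a s) (g s) =
        ∑ j ∈ Finset.range M, (Finset.univ.filter fun s : Fin k => j < a s ∨ j < g s).card := by
    intro g hg
    have h1 : ∀ s : Fin k, max (a s) (g s) =
        ((Finset.range M).filter fun j => j < a s ∨ j < g s).card := by
      intro s
      have he : ((Finset.range M).filter fun j => j < a s ∨ j < g s) =
          Finset.range (max (a s) (g s)) := by
        ext j
        simp only [Finset.mem_filter, Finset.mem_range, lt_max_iff]
        constructor
        · rintro ⟨_, h⟩; exact h
        · intro h; exact ⟨lt_trans (lt_max_iff.mpr h) (hg s), h⟩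
      rw [he, Finset.card_range]
    calc ∑ s, max (a s) (g s)
        = ∑ s : Fin k, ((Finset.range M).filter fun j => j < a s ∨ j < g s).card :=
          Finset.sum_congr rfl fun s _ => h1 s
      _ = ∑ s : Fin k, ∑ j ∈ Finset.range M, if j < a s ∨ j < g s then 1 else 0 := by
          refine Finset.sum_congr rfl fun s _ => ?_
          exact Finset.card_filter _ _
      _ = ∑ j ∈ Finset.range M, ∑ s : Fin k, if j < a s ∨ j < g s then 1 else 0 :=
          Finset.sum_comm
      _ = ∑ j ∈ Finset.range M, (Finset.univ.filter fun s : Fin k => j < a s ∨ j < g s).card := by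
          refine Finset.sum_congr rfl fun j _ => ?_
          exact (Finset.card_filter _ _).symm
  have hbnd2 : ∀ s : Fin k, max (a s) (b (σ s)) < M := by
    intro s
    exact max_lt (lt_of_le_of_lt (le_max_left _ (b s)) (hbnd s))
      (lt_of_le_of_lt (le_max_right (a (σ s)) _) (hbnd (σ s)))
  rw [key b hbnd, key (fun s => b (σ s)) hbnd2]
  refine Finset.sum_le_sum fun j _ => ?_
  set A := Finset.univ.filter fun s : Fin k => j < a s with hAdef
  set B := Finset.univ.filter fun s : Fin k => j < b s with hBdef
  set C := Finset.univ.filter fun s : Fin k => j < b (σ s) with hCdef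
  have hAB : (Finset.univ.filter fun s : Fin k => j < a s ∨ j < b s) = A ∪ B :=
    Finset.filter_or _ _ _
  have hAC : (Finset.univ.filter fun s : Fin k => j < a s ∨ j < b (σ s)) = A ∪ C :=
    Finset.filter_or _ _ _
  rw [hAB, hAC]
  have hCB : B.card = C.card := by
    refine Finset.card_bij (fun s _ => σ s) ?_ ?_ ?_ |>.symm
    · intro s hs
      rw [hCdef, Finset.mem_filter] at hs
      rw [hBdef, Finset.mem_filter]
      exact ⟨Finset.mem_univ _, hs.2⟩
    · intro s₁ h₁ s₂ h₂ h
      exact σ.injective h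
    · intro y hy
      rw [hBdef, Finset.mem_filter] at hy
      refine ⟨σ⁻¹ y, ?_, by simp⟩
      rw [hCdef, Finset.mem_filter]
      refine ⟨Finset.mem_univ _, ?_⟩
      rw [← Equiv.Perm.mul_apply, mul_inv_cancel, Equiv.Perm.one_apply]
      exact hy.2
  have hlowA : ∀ ⦃s s' : Fin k⦄, s' ≤ s → s ∈ A → s' ∈ A := by
    intro s s' hss hs
    simp only [hAdef, Finset.mem_filter, Finset.mem_univ, true_and] at hs ⊢
    exact lt_of_lt_of_le hs (ha hss)
  have hlowB : ∀ ⦃s s' : Fin k⦄, s' ≤ s → s ∈ B → s' ∈ B := by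
    intro s s' hss hs
    simp only [hBdef, Finset.mem_filter, Finset.mem_univ, true_and] at hs ⊢
    exact lt_of_lt_of_le hs (hb hss)
  rcases chain_of_lower hlowA hlowB with h | h
  · rw [Finset.union_eq_right.mpr h, hCB]
    exact Finset.card_le_card Finset.subset_union_right
  · rw [Finset.union_eq_left.mpr h]
    exact Finset.card_le_card Finset.subset_union_left

end AuxRearr

theorem stmt16 {R : Type*} [CommRing R] [IsDomain R] [IsDiscreteValuationRing R]
    [CharZero (IsLocalRing.ResidueField R)]
    (t : R) (ht : Irreducible t) (r : ℕ) (μ : ℕ → ℕ)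
    (hμ : ∀ i, 1 ≤ i → i < r → μ (i + 1) ≤ μ i)
    (Q : Matrix (Fin r) (Fin r) R) (hQ : MuAdmissible t r μ Q)
    (k : ℕ) (hkr : k ≤ r) (I H : Fin k → Fin r)
    (hI : StrictMono I) (hH : StrictMono H) :
    ((wt r μ (fun s => min (I s) (H s)) - wt r μ I : ℕ) : ℕ∞) ≤
      ord t (Q.submatrix I H).det := by
  classical
  obtain ⟨-, P, hP⟩ := hQ
  have htne : t ≠ 0 := ht.ne_zero
  have hmono : ∀ y x : ℕ, 1 ≤ x → x ≤ y → y ≤ r → μ y ≤ μ x := by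
    intro y
    induction y with
    | zero => intro x hx hxy _; exact (Nat.not_succ_le_zero 0 (hx.trans hxy)).elim
    | succ n ih =>
      intro x hx hxy hyr
      rcases Nat.eq_or_lt_of_le hxy with rfl | h
      · exact le_rfl
      · have hxn : x ≤ n := Nat.lt_succ_iff.mp h
        exact le_trans (hμ n (le_trans hx hxn) (by omega)) (ih x hx hxn (by omega))
  set a : Fin k → ℕ := fun s => μ ((I s).1 + 1) with haa
  set b : Fin k → ℕ := fun s => μ ((H s).1 + 1) with hbb
  have ha : Antitone a := by
    intro s s' hss
    exact hmono _ _ (Nat.le_add_left 1 _)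
      (Nat.add_le_add_right (Fin.le_def.mp (hI.monotone hss)) 1) (I s').isLt
  have hb : Antitone b := by
    intro s s' hss
    exact hmono _ _ (Nat.le_add_left 1 _)
      (Nat.add_le_add_right (Fin.le_def.mp (hH.monotone hss)) 1) (H s').isLt
  have hent : ∀ (i j : Fin r),
      t ^ (max (μ (i.1 + 1)) (μ (j.1 + 1)) - μ (i.1 + 1)) ∣ Q i j := by
    intro i j
    have h1 : t ^ μ (i.1 + 1) * Q i j = P i j * t ^ μ (j.1 + 1) := by
      have h2 := congrFun (congrFun hP i) j
      simpa [Dmu, Matrix.diagonal_mul, Matrix.mul_diagonal] using h2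
    rcases le_total (μ (j.1 + 1)) (μ (i.1 + 1)) with h | h
    · simp [max_eq_left h]
    · rw [max_eq_right h]
      have h3 : t ^ μ (i.1 + 1) * Q i j
          = t ^ μ (i.1 + 1) * (P i j * t ^ (μ (j.1 + 1) - μ (i.1 + 1))) := by
        rw [h1, ← pow_sub_mul_pow t h]; ring
      have h4 : Q i j = P i j * t ^ (μ (j.1 + 1) - μ (i.1 + 1)) :=
        mul_left_cancel₀ (pow_ne_zero _ htne) h3
      exact Dvd.intro_left _ h4.symm
  have hwtmin : wt r μ (fun s => min (I s) (H s)) = ∑ s, max (a s) (b s) := by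
    unfold wt
    refine Finset.sum_congr rfl fun s _ => ?_
    show μ ((min (I s) (H s)).1 + 1) = max (a s) (b s)
    rcases le_total (I s) (H s) with h | h
    · rw [min_eq_left h, max_eq_left (hmono _ _ (Nat.le_add_left 1 _)
        (Nat.add_le_add_right (Fin.le_def.mp h) 1) (H s).isLt)]
    · rw [min_eq_right h, max_eq_right (hmono _ _ (Nat.le_add_left 1 _)
        (Nat.add_le_add_right (Fin.le_def.mp h) 1) (I s).isLt)]
  have hwtI : wt r μ I = ∑ s, a s := rfl
  rw [Matrix.det_apply]
  show _ ≤ emultiplicity t _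
  apply le_emultiplicity_of_pow_dvd
  apply Finset.dvd_sum
  intro σ _
  have hdvd : t ^ (wt r μ (fun s => min (I s) (H s)) - wt r μ I)
      ∣ ∏ s, (Q.submatrix I H) (σ s) s := by
    have hprod : t ^ (∑ s, (max (a (σ s)) (b s) - a (σ s)))
        ∣ ∏ s, (Q.submatrix I H) (σ s) s := by
      rw [← Finset.prod_pow_eq_pow_sum]
      exact Finset.prod_dvd_prod_of_dvd _ _ (fun s _ => hent (I (σ s)) (H s))
    refine dvd_trans (pow_dvd_pow t ?_) hprod
    have hsum1 : ∑ s, (max (a (σ s)) (b s) - a (σ s)) + ∑ s, a (σ s)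
        = ∑ s, max (a (σ s)) (b s) := by
      rw [← Finset.sum_add_distrib]
      exact Finset.sum_congr rfl fun s _ => Nat.sub_add_cancel (le_max_left _ _)
    have hsum2 : ∑ s, a (σ s) = ∑ s, a s := Equiv.sum_comp σ a
    have hre : ∑ s, max (a s) (b s) ≤ ∑ s, max (a (σ s)) (b s) := by
      calc ∑ s, max (a s) (b s) ≤ ∑ s, max (a s) (b (σ⁻¹ s)) :=
            maxsum_rearr a b ha hb σ⁻¹
        _ = ∑ s, max (a (σ s)) (b (σ⁻¹ (σ s))) :=
            (Equiv.sum_comp σ fun s => max (a s) (b (σ⁻¹ s))).symm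
        _ = ∑ s, max (a (σ s)) (b s) := by simp
    omega
  have hsmul : (Equiv.Perm.sign σ) • ∏ s, (Q.submatrix I H) (σ s) s
      = ((Equiv.Perm.sign σ : ℤ) : R) * ∏ s, (Q.submatrix I H) (σ s) s := by
    rw [Units.smul_def, zsmul_eq_mul]
  rw [hsmul]
  exact hdvd.mul_left _
end
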